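/- arXiv:2211.12813 — 6 statements merged into one kernel-verified Lean document; each statement's English description precedes it below -/
import Mathlib

section
/- Let G be a finite connected k-regular simple graph, fix an arbitrary orientation of its edges so each edge e has an origin e⁻ and extremity e⁺, and let g : V → ℝ. Set B_g = Σ_{e ∈ E} |g(e⁺)² − g(e⁻)²|, let ‖g‖ be the ℓ² norm of g on V, and let ‖dg‖ be the ℓ² norm on E of the function dg(e) = g(e⁺) − g(e⁻). Then B_g ≤ √(2k) · ‖dg‖ · ‖g‖. -/
open scoped Classical

/-- The "colour distance" between two vertices under a colouring `f`. -/
def hDist {V : Type*} (f : V → ℕ) (u v : V) : ℕ := ((f u : ℤ) - (f v : ℤ)).natAbs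

/-- An `L(h,k)`-colouring of the hypergraph with edge family `E`. -/
def IsLColoring {V : Type*} (E : Finset (Finset V)) (h k : ℕ) (f : V → ℕ) : Prop :=
  (∀ u v : V, u ≠ v → (∃ e ∈ E, u ∈ e ∧ v ∈ e) → h ≤ hDist f u v) ∧
  (∀ u v : V, u ≠ v →
    (∃ e₁ ∈ E, ∃ e₂ ∈ E, u ∈ e₁ ∧ v ∈ e₂ ∧ ((e₁ ∩ e₂) \ {u, v}).Nonempty) →
    k ≤ hDist f u v)

/-- The span of a colouring: maximum colour minus minimum colour. -/
noncomputable def hSpan {V : Type*} [Fintype V] (f : V → ℕ) : ℕ :=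
  Finset.univ.sup f - sInf (Set.range f)

/-- The `L(h,k)`-chromatic number of a hypergraph. -/
noncomputable def lamL {V : Type*} [Fintype V] (E : Finset (Finset V)) (h k : ℕ) : ℕ :=
  sInf {s | ∃ f : V → ℕ, IsLColoring E h k f ∧ hSpan f = s}

/-- A simple hypergraph: edges have cardinality at least 2, and no edge contains another. -/
def HSimple {V : Type*} (E : Finset (Finset V)) : Prop :=
  (∀ e ∈ E, 2 ≤ e.card) ∧ ∀ e₁ ∈ E, ∀ e₂ ∈ E, e₁ ⊆ e₂ → e₁ = e₂

/-- Degree of a vertex in a hypergraph. -/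
noncomputable def hDeg {V : Type*} (E : Finset (Finset V)) (v : V) : ℕ :=
  (E.filter (fun e => v ∈ e)).card

/-- The 2-section of a hypergraph. -/
def twoSection {V : Type*} (E : Finset (Finset V)) : SimpleGraph V where
  Adj u v := u ≠ v ∧ ∃ e ∈ E, u ∈ e ∧ v ∈ e
  symm := by
    constructor
    rintro u v ⟨huv, e, he, hu, hv⟩
    exact ⟨huv.symm, e, he, hv, hu⟩
  loopless := by
    constructor
    rintro u ⟨h, -⟩
    exact h rfl
/-- An `L(h,k)`-colouring of a simple graph. -/
def IsGLColoring {V : Type*} (G : SimpleGraph V) (h k : ℕ) (f : V → ℕ) : Prop :=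
  (∀ u v : V, G.Adj u v → h ≤ hDist f u v) ∧
  (∀ u v : V, G.dist u v = 2 → k ≤ hDist f u v)

/-- The `L(h,k)`-chromatic number of a simple graph. -/
noncomputable def lamG {V : Type*} [Fintype V] (G : SimpleGraph V) (h k : ℕ) : ℕ :=
  sInf {s | ∃ f : V → ℕ, IsGLColoring G h k f ∧ hSpan f = s}

/-- The edge boundary of a vertex set `F`: edges with exactly one endpoint in `F`. -/
def graphBoundary {V : Type*} (G : SimpleGraph V) (F : Finset V) : Set (Sym2 V) :=
  {e | e ∈ G.edgeSet ∧ ∃ a b, e = s(a, b) ∧ a ∈ F ∧ b ∉ F}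

/-- The expansion (isoperimetric) constant of a graph. -/
noncomputable def expansion {V : Type*} [Fintype V] (G : SimpleGraph V) : ℝ :=
  sInf {r : ℝ | ∃ F : Finset V, 0 < F.card ∧ 2 * F.card ≤ Fintype.card V ∧
      r = (graphBoundary G F).ncard / F.card}

/-- For a finite connected `k`-regular simple graph with an arbitrary
orientation `D` of its edges and `g : V → ℝ`:
`B_g = Σ_e |g(e⁺)² − g(e⁻)²| ≤ √(2k) · ‖dg‖ · ‖g‖`. -/
theorem Bg_le_sqrt_two_k_mul {V : Type*} [Fintype V] (G : SimpleGraph V) (k : ℕ)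
    (hconn : G.Connected) (hreg : G.IsRegularOfDegree k)
    (D : Finset (V × V))
    (horient : Set.BijOn (fun p : V × V => s(p.1, p.2)) ↑D G.edgeSet)
    (g : V → ℝ) :
    ∑ p ∈ D, |g p.2 ^ 2 - g p.1 ^ 2| ≤
      Real.sqrt (2 * k) * Real.sqrt (∑ p ∈ D, (g p.2 - g p.1) ^ 2) *
        Real.sqrt (∑ x : V, g x ^ 2) := by
  have hmem : ∀ p ∈ D, s(p.1, p.2) ∈ G.edgeSet := fun p hp => horient.mapsTo hp
  have hne : ∀ p ∈ D, p.1 ≠ p.2 := by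
    intro p hp h
    exact G.loopless.irrefl p.2 (by simpa [h] using hmem p hp)
  have hcard : ∀ x : V, (D.filter fun p => x = p.1 ∨ x = p.2).card = k := by
    intro x
    rw [← hreg x, ← SimpleGraph.card_incidenceFinset_eq_degree]
    apply Finset.card_bij (fun p _ => s(p.1, p.2))
    · intro p hp
      simp only [Finset.mem_filter] at hp
      rw [SimpleGraph.mem_incidenceFinset]
      exact ⟨hmem p hp.1, Sym2.mem_iff.mpr hp.2⟩
    · intro p hp q hq h
      simp only [Finset.mem_filter] at hp hq
      exact horient.injOn hp.1 hq.1 h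
    · intro e he
      rw [SimpleGraph.mem_incidenceFinset] at he
      obtain ⟨p, hp, hpe⟩ := horient.surjOn he.1
      refine ⟨p, Finset.mem_filter.2 ⟨hp, ?_⟩, hpe⟩
      have hx := he.2
      rw [← hpe] at hx
      exact Sym2.mem_iff.mp hx
  have key : ∑ p ∈ D, (g p.1 ^ 2 + g p.2 ^ 2) = (k : ℝ) * ∑ x : V, g x ^ 2 := by
    have step : ∀ p ∈ D, g p.1 ^ 2 + g p.2 ^ 2
        = ∑ x : V, if x = p.1 ∨ x = p.2 then g x ^ 2 else 0 := by
      intro p hp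
      rw [← Finset.sum_filter]
      have hfil : (Finset.univ.filter fun x => x = p.1 ∨ x = p.2)
          = ({p.1, p.2} : Finset V) := by
        ext x; simp [Finset.mem_insert]
      rw [hfil, Finset.sum_pair (hne p hp)]
    rw [Finset.sum_congr rfl step, Finset.sum_comm]
    rw [Finset.mul_sum]
    refine Finset.sum_congr rfl fun x _ => ?_
    rw [← Finset.sum_filter, Finset.sum_const, hcard x, nsmul_eq_mul]
  have hCS : ∑ p ∈ D, |g p.2 ^ 2 - g p.1 ^ 2| ≤
      Real.sqrt (∑ p ∈ D, (g p.2 - g p.1) ^ 2) *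
        Real.sqrt (∑ p ∈ D, (g p.2 + g p.1) ^ 2) := by
    have h1 : ∀ p ∈ D, |g p.2 ^ 2 - g p.1 ^ 2|
        = |g p.2 - g p.1| * |g p.2 + g p.1| := by
      intro p _
      rw [← abs_mul]
      ring_nf
    rw [Finset.sum_congr rfl h1]
    have := Real.sum_mul_le_sqrt_mul_sqrt D (fun p => |g p.2 - g p.1|)
      (fun p => |g p.2 + g p.1|)
    simpa [sq_abs] using this
  have hsum : ∑ p ∈ D, (g p.2 + g p.1) ^ 2 ≤ 2 * k * ∑ x : V, g x ^ 2 := by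
    calc ∑ p ∈ D, (g p.2 + g p.1) ^ 2 ≤ ∑ p ∈ D, 2 * (g p.1 ^ 2 + g p.2 ^ 2) := by
          refine Finset.sum_le_sum fun p _ => ?_
          nlinarith [sq_nonneg (g p.2 - g p.1)]
      _ = 2 * k * ∑ x : V, g x ^ 2 := by
          rw [← Finset.mul_sum, key]; ring
  have h2 : Real.sqrt (∑ p ∈ D, (g p.2 + g p.1) ^ 2) ≤
      Real.sqrt (2 * k) * Real.sqrt (∑ x : V, g x ^ 2) := by
    rw [← Real.sqrt_mul (by positivity)]
    exact Real.sqrt_le_sqrt hsum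
  calc ∑ p ∈ D, |g p.2 ^ 2 - g p.1 ^ 2| ≤
      Real.sqrt (∑ p ∈ D, (g p.2 - g p.1) ^ 2) *
        Real.sqrt (∑ p ∈ D, (g p.2 + g p.1) ^ 2) := hCS
    _ ≤ Real.sqrt (∑ p ∈ D, (g p.2 - g p.1) ^ 2) *
        (Real.sqrt (2 * k) * Real.sqrt (∑ x : V, g x ^ 2)) :=
        mul_le_mul_of_nonneg_left h2 (Real.sqrt_nonneg _)
    _ = Real.sqrt (2 * k) * Real.sqrt (∑ p ∈ D, (g p.2 - g p.1) ^ 2) *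
        Real.sqrt (∑ x : V, g x ^ 2) := by ring
end

section
/- Let G be a finite connected k-regular simple graph on n vertices, fix an arbitrary orientation of its edges, and let g : V → ℝ satisfy |{x ∈ V : g(x) ≠ 0}| ≤ n/2 and g(x) ≥ 0 for all x. Set B_g = Σ_{e ∈ E} |g(e⁺)² − g(e⁻)²|. Then B_g ≥ h(G) · ‖g‖², where h(G) is the expansion constant of G and ‖g‖ is the ℓ² norm of g. -/
open scoped Classical

noncomputable def prevv (T : Finset ℝ) (t : ℝ) : ℝ :=
  WithBot.unbotD 0 (((insert (0:ℝ) T).filter (· < t)).max)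

lemma prevv_spec (T : Finset ℝ) {t : ℝ} (ht : 0 < t) :
    prevv T t ∈ insert (0:ℝ) T ∧ prevv T t < t := by
  have h0 : (0:ℝ) ∈ (insert (0:ℝ) T).filter (· < t) := by
    simp [Finset.mem_filter, ht]
  have hne : ((insert (0:ℝ) T).filter (· < t)).Nonempty := ⟨0, h0⟩
  have hcoe : prevv T t = ((insert (0:ℝ) T).filter (· < t)).max' hne := by
    unfold prevv
    rw [← Finset.coe_max' hne]
    rfl
  rw [hcoe]
  have := Finset.max'_mem _ hne
  rw [Finset.mem_filter] at this
  exact ⟨this.1, this.2⟩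

lemma le_prevv (T : Finset ℝ) {t s : ℝ} (ht : 0 < t) (hs : s ∈ insert (0:ℝ) T)
    (hst : s < t) : s ≤ prevv T t := by
  have h0 : (0:ℝ) ∈ (insert (0:ℝ) T).filter (· < t) := by
    simp [Finset.mem_filter, ht]
  have hne : ((insert (0:ℝ) T).filter (· < t)).Nonempty := ⟨0, h0⟩
  have hcoe : prevv T t = ((insert (0:ℝ) T).filter (· < t)).max' hne := by
    unfold prevv
    rw [← Finset.coe_max' hne]
    rfl
  rw [hcoe]
  have hmem : s ∈ (insert (0:ℝ) T).filter (· < t) := Finset.mem_filter.2 ⟨hs, hst⟩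
  exact Finset.le_max' _ s hmem

lemma telescope (T : Finset ℝ) (hT : ∀ x ∈ T, 0 ≤ x) :
    ∀ N : ℕ, ∀ a : ℝ, a ∈ insert (0:ℝ) T →
      (T.filter (fun t => 0 < t ∧ t ≤ a)).card ≤ N →
      ∑ t ∈ T.filter (fun t => 0 < t ∧ t ≤ a), (t - prevv T t) = a := by
  intro N
  induction N with
  | zero =>
    intro a ha hcard
    by_cases ha0 : 0 < a
    · have haT : a ∈ T := by
        rcases Finset.mem_insert.1 ha with h | h
        · exact absurd h ha0.ne'
        · exact h
      have : a ∈ T.filter (fun t => 0 < t ∧ t ≤ a) :=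
        Finset.mem_filter.2 ⟨haT, ha0, le_refl a⟩
      have := Finset.card_pos.2 ⟨a, this⟩
      omega
    · have ha' : a = 0 := by
        rcases Finset.mem_insert.1 ha with h | h
        · exact h
        · exact le_antisymm (not_lt.1 ha0) (hT a h)
      have hempty : T.filter (fun t => 0 < t ∧ t ≤ a) = ∅ := by
        apply Finset.filter_false_of_mem
        intro t _ ⟨h1, h2⟩
        linarith [ha' ▸ h2]
      rw [hempty, Finset.sum_empty, ha']
  | succ N ih =>
    intro a ha hcard
    by_cases ha0 : 0 < a
    · have haT : a ∈ T := by
        rcases Finset.mem_insert.1 ha with h | h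
        · exact absurd h ha0.ne'
        · exact h
      obtain ⟨hpmem, hplt⟩ := prevv_spec T ha0
      set p := prevv T a with hp
      have hp0 : 0 ≤ p := by
        rcases Finset.mem_insert.1 hpmem with h | h
        · exact le_of_eq h.symm
        · exact hT p h
      have hset : T.filter (fun t => 0 < t ∧ t ≤ a)
          = insert a (T.filter (fun t => 0 < t ∧ t ≤ p)) := by
        ext t
        simp only [Finset.mem_filter, Finset.mem_insert]
        constructor
        · rintro ⟨htT, ht0, hta⟩
          by_cases hta' : t = a
          · exact Or.inl hta'
          · right
            refine ⟨htT, ht0, ?_⟩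
            exact le_prevv T ha0 (Finset.mem_insert_of_mem htT) (lt_of_le_of_ne hta hta')
        · rintro (rfl | ⟨htT, ht0, htp⟩)
          · exact ⟨haT, ha0, le_refl _⟩
          · exact ⟨htT, ht0, le_trans htp (le_of_lt hplt)⟩
      have hanot : a ∉ T.filter (fun t => 0 < t ∧ t ≤ p) := by
        simp only [Finset.mem_filter]
        rintro ⟨-, -, h⟩
        linarith
      have hcard' : (T.filter (fun t => 0 < t ∧ t ≤ p)).card ≤ N := by
        have := hset ▸ hcard
        rw [Finset.card_insert_of_notMem hanot] at this
        omega
      rw [hset, Finset.sum_insert hanot, ih p hpmem hcard']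
      ring
    · have ha' : a = 0 := by
        rcases Finset.mem_insert.1 ha with h | h
        · exact h
        · exact le_antisymm (not_lt.1 ha0) (hT a h)
      have hempty : T.filter (fun t => 0 < t ∧ t ≤ a) = ∅ := by
        apply Finset.filter_false_of_mem
        intro t _ ⟨h1, h2⟩
        linarith [ha' ▸ h2]
      rw [hempty, Finset.sum_empty, ha']

lemma sumW (T : Finset ℝ) (hT : ∀ x ∈ T, 0 ≤ x) {a : ℝ} (ha : a ∈ insert (0:ℝ) T) :
    ∑ t ∈ T.filter (fun t => 0 < t), (t - prevv T t) * (if t ≤ a then (1:ℝ) else 0) = a := by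
  have h : ∑ t ∈ T.filter (fun t => 0 < t), (t - prevv T t) * (if t ≤ a then (1:ℝ) else 0)
      = ∑ t ∈ T.filter (fun t => 0 < t ∧ t ≤ a), (t - prevv T t) := by
    rw [Finset.sum_filter, Finset.sum_filter]
    apply Finset.sum_congr rfl
    intro t _
    by_cases h1 : 0 < t <;> by_cases h2 : t ≤ a <;> simp [h1, h2]
  rw [h]
  exact telescope T hT _ a ha (le_refl _)

lemma absdiff_le (T : Finset ℝ) (hT : ∀ x ∈ T, 0 ≤ x) {a b : ℝ}
    (ha : a ∈ insert (0:ℝ) T) (hb : b ∈ insert (0:ℝ) T) (hba : b ≤ a) :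
    |a - b| = ∑ t ∈ T.filter (fun t => 0 < t),
      (t - prevv T t) * |(if t ≤ a then (1:ℝ) else 0) - (if t ≤ b then 1 else 0)| := by
  rw [abs_of_nonneg (by linarith)]
  have h : ∀ t ∈ T.filter (fun t => 0 < t),
      (t - prevv T t) * |(if t ≤ a then (1:ℝ) else 0) - (if t ≤ b then 1 else 0)|
      = (t - prevv T t) * (if t ≤ a then (1:ℝ) else 0)
        - (t - prevv T t) * (if t ≤ b then (1:ℝ) else 0) := by
    intro t _
    by_cases h2 : t ≤ b
    · have h1 : t ≤ a := le_trans h2 hba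
      simp [h1, h2]
    · by_cases h1 : t ≤ a <;> simp [h1, h2]
  rw [Finset.sum_congr rfl h, Finset.sum_sub_distrib, sumW T hT ha, sumW T hT hb]

lemma absdiff (T : Finset ℝ) (hT : ∀ x ∈ T, 0 ≤ x) {a b : ℝ}
    (ha : a ∈ insert (0:ℝ) T) (hb : b ∈ insert (0:ℝ) T) :
    |a - b| = ∑ t ∈ T.filter (fun t => 0 < t),
      (t - prevv T t) * |(if t ≤ a then (1:ℝ) else 0) - (if t ≤ b then 1 else 0)| := by
  rcases le_total b a with h | h
  · exact absdiff_le T hT ha hb h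
  · rw [abs_sub_comm, absdiff_le T hT hb ha h]
    apply Finset.sum_congr rfl
    intro t _
    rw [abs_sub_comm]

/-- For a finite connected `k`-regular simple graph on `n` vertices with an
arbitrary orientation `D` of its edges and nonnegative `g : V → ℝ` supported on at most `n/2`
vertices: `B_g ≥ h(G) · ‖g‖²`. -/
theorem Bg_ge_expansion_mul_normSq {V : Type*} [Fintype V] (G : SimpleGraph V) (k n : ℕ)
    (hn : Fintype.card V = n)
    (hconn : G.Connected) (hreg : G.IsRegularOfDegree k)
    (D : Finset (V × V))
    (horient : Set.BijOn (fun p : V × V => s(p.1, p.2)) ↑D G.edgeSet)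
    (g : V → ℝ)
    (hsupp : 2 * {x : V | g x ≠ 0}.ncard ≤ n)
    (hpos : ∀ x : V, 0 ≤ g x) :
    expansion G * ∑ x : V, g x ^ 2 ≤ ∑ p ∈ D, |g p.2 ^ 2 - g p.1 ^ 2| := by
  classical
  set φ : V → ℝ := fun x => g x ^ 2 with hφdef
  set T : Finset ℝ := Finset.image φ Finset.univ with hTdef
  have hT : ∀ x ∈ T, 0 ≤ x := by
    intro x hx
    obtain ⟨y, -, rfl⟩ := Finset.mem_image.1 hx
    positivity
  have hmemT : ∀ x : V, φ x ∈ insert (0:ℝ) T := fun x =>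
    Finset.mem_insert_of_mem (Finset.mem_image_of_mem φ (Finset.mem_univ x))
  set W : ℝ → ℝ := fun t => t - prevv T t with hWdef
  have hW : ∀ t ∈ T.filter (fun t => 0 < t), 0 ≤ W t := by
    intro t ht
    have := (prevv_spec T (Finset.mem_filter.1 ht).2).2
    simp only [hWdef]
    linarith
  set F : ℝ → Finset V := fun t => Finset.univ.filter (fun x => t ≤ φ x) with hFdef
  set Cr : ℝ → V × V → Prop :=
    fun t p => (t ≤ φ p.1 ∧ ¬ t ≤ φ p.2) ∨ (t ≤ φ p.2 ∧ ¬ t ≤ φ p.1) with hCrdef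
  -- expansion is nonnegative
  have hexp0 : 0 ≤ expansion G := by
    apply Real.sInf_nonneg
    rintro r ⟨Fs, hF1, hF2, rfl⟩
    positivity
  -- step 1
  have hLHS : ∑ x : V, φ x
      = ∑ t ∈ T.filter (fun t => 0 < t), W t * ((F t).card : ℝ) := by
    have h1 : ∀ x : V, φ x
        = ∑ t ∈ T.filter (fun t => 0 < t), W t * (if t ≤ φ x then (1:ℝ) else 0) :=
      fun x => (sumW T hT (hmemT x)).symm
    calc ∑ x : V, φ x
        = ∑ x : V, ∑ t ∈ T.filter (fun t => 0 < t), W t * (if t ≤ φ x then (1:ℝ) else 0) :=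
          Finset.sum_congr rfl (fun x _ => h1 x)
      _ = ∑ t ∈ T.filter (fun t => 0 < t), ∑ x : V, W t * (if t ≤ φ x then (1:ℝ) else 0) :=
          Finset.sum_comm
      _ = ∑ t ∈ T.filter (fun t => 0 < t), W t * ((F t).card : ℝ) := by
          apply Finset.sum_congr rfl
          intro t _
          rw [← Finset.mul_sum, Finset.sum_boole]
  -- step 2
  have hRHS : ∑ p ∈ D, |φ p.2 - φ p.1|
      = ∑ t ∈ T.filter (fun t => 0 < t), W t * (((D.filter (Cr t)).card : ℝ)) := by
    have h1 : ∀ p : V × V, |φ p.2 - φ p.1|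
        = ∑ t ∈ T.filter (fun t => 0 < t),
            W t * |(if t ≤ φ p.2 then (1:ℝ) else 0) - (if t ≤ φ p.1 then 1 else 0)| :=
      fun p => absdiff T hT (hmemT p.2) (hmemT p.1)
    calc ∑ p ∈ D, |φ p.2 - φ p.1|
        = ∑ p ∈ D, ∑ t ∈ T.filter (fun t => 0 < t),
            W t * |(if t ≤ φ p.2 then (1:ℝ) else 0) - (if t ≤ φ p.1 then 1 else 0)| :=
          Finset.sum_congr rfl (fun p _ => h1 p)
      _ = ∑ t ∈ T.filter (fun t => 0 < t), ∑ p ∈ D,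
            W t * |(if t ≤ φ p.2 then (1:ℝ) else 0) - (if t ≤ φ p.1 then 1 else 0)| :=
          Finset.sum_comm
      _ = ∑ t ∈ T.filter (fun t => 0 < t), W t * (((D.filter (Cr t)).card : ℝ)) := by
          apply Finset.sum_congr rfl
          intro t _
          rw [← Finset.mul_sum]
          congr 1
          rw [← Finset.sum_boole]
          apply Finset.sum_congr rfl
          intro p _
          by_cases h1 : t ≤ φ p.1 <;> by_cases h2 : t ≤ φ p.2 <;>
            simp [hCrdef, h1, h2]
  -- step 3
  have hstep3 : ∀ t ∈ T.filter (fun t => 0 < t),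
      expansion G * ((F t).card : ℝ) ≤ ((D.filter (Cr t)).card : ℝ) := by
    intro t ht
    have ht0 : 0 < t := (Finset.mem_filter.1 ht).2
    by_cases hFc : (F t).card = 0
    · rw [hFc]
      simp
    · have hFpos : 0 < (F t).card := Nat.pos_of_ne_zero hFc
      -- the boundary is contained in the image of crossing oriented edges
      have hsub : graphBoundary G (F t) ⊆
          ↑((D.filter (Cr t)).image (fun p : V × V => s(p.1, p.2))) := by
        rintro e ⟨heE, a, b, rfl, haF, hbF⟩
        obtain ⟨p, hpD, hpe⟩ := horient.surjOn heE
        simp only at hpe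
        have ha' : t ≤ φ a := (Finset.mem_filter.1 haF).2
        have hb' : ¬ t ≤ φ b := fun h => hbF (Finset.mem_filter.2 ⟨Finset.mem_univ b, h⟩)
        have hcr : Cr t p := by
          rcases Sym2.eq_iff.1 hpe with ⟨h1, h2⟩ | ⟨h1, h2⟩
          · exact Or.inl ⟨h1 ▸ ha', h2 ▸ hb'⟩
          · exact Or.inr ⟨h2 ▸ ha', h1 ▸ hb'⟩
        exact Finset.mem_coe.2 (Finset.mem_image.2
          ⟨p, Finset.mem_filter.2 ⟨hpD, hcr⟩, hpe⟩)
      have hbcard : (graphBoundary G (F t)).ncard ≤ (D.filter (Cr t)).card := by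
        calc (graphBoundary G (F t)).ncard
            ≤ (↑((D.filter (Cr t)).image (fun p : V × V => s(p.1, p.2))) :
                Set (Sym2 V)).ncard :=
              Set.ncard_le_ncard hsub (Finset.finite_toSet _)
          _ = ((D.filter (Cr t)).image (fun p : V × V => s(p.1, p.2))).card :=
              Set.ncard_coe_finset _
          _ ≤ (D.filter (Cr t)).card := Finset.card_image_le
      -- size condition
      have hF2 : 2 * (F t).card ≤ Fintype.card V := by
        have hsub' : F t ⊆ Finset.univ.filter (fun x => g x ≠ 0) := by
          intro x hx
          have hx' : t ≤ φ x := (Finset.mem_filter.1 hx).2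
          refine Finset.mem_filter.2 ⟨Finset.mem_univ x, ?_⟩
          intro h0
          rw [hφdef] at hx'
          simp only [h0] at hx'
          norm_num at hx'
          linarith
        have hcard_eq : (Finset.univ.filter (fun x => g x ≠ 0)).card
            = {x : V | g x ≠ 0}.ncard := by
          rw [Set.ncard_eq_toFinset_card', Set.toFinset_setOf]
        have := Finset.card_le_card hsub'
        omega
      -- expansion is at most the ratio
      have hmem : ((graphBoundary G (F t)).ncard : ℝ) / ((F t).card : ℝ) ∈
          {r : ℝ | ∃ Fs : Finset V, 0 < Fs.card ∧ 2 * Fs.card ≤ Fintype.card V ∧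
            r = (graphBoundary G Fs).ncard / Fs.card} :=
        ⟨F t, hFpos, hF2, rfl⟩
      have hbdd : BddBelow {r : ℝ | ∃ Fs : Finset V, 0 < Fs.card ∧
          2 * Fs.card ≤ Fintype.card V ∧ r = (graphBoundary G Fs).ncard / Fs.card} := by
        refine ⟨0, ?_⟩
        rintro r ⟨Fs, h1, h2, rfl⟩
        positivity
      have hle : expansion G ≤ ((graphBoundary G (F t)).ncard : ℝ) / ((F t).card : ℝ) :=
        csInf_le hbdd hmem
      have hFcpos : (0:ℝ) < ((F t).card : ℝ) := by exact_mod_cast hFpos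
      calc expansion G * ((F t).card : ℝ)
          ≤ (((graphBoundary G (F t)).ncard : ℝ) / ((F t).card : ℝ)) * ((F t).card : ℝ) :=
            mul_le_mul_of_nonneg_right hle (le_of_lt hFcpos)
        _ = ((graphBoundary G (F t)).ncard : ℝ) := div_mul_cancel₀ _ (ne_of_gt hFcpos)
        _ ≤ ((D.filter (Cr t)).card : ℝ) := by exact_mod_cast hbcard
  -- combine
  show expansion G * ∑ x : V, φ x ≤ ∑ p ∈ D, |φ p.2 - φ p.1|
  rw [hLHS, hRHS, Finset.mul_sum]
  apply Finset.sum_le_sum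
  intro t ht
  calc expansion G * (W t * ((F t).card : ℝ))
      = W t * (expansion G * ((F t).card : ℝ)) := by ring
    _ ≤ W t * ((D.filter (Cr t)).card : ℝ) :=
        mul_le_mul_of_nonneg_left (hstep3 t ht) (hW t ht)
end

section
/- If H is a simple hypergraph of order n with strong chromatic number χ′(H) = k′, then for any nonnegative integers h > k, λ_{h,k}(H) ≤ k(n - k′) + (k′ - 1)h. -/
open scoped Classical

/-- The strong chromatic number of a hypergraph: the least `k` admitting a colouring with `k`
colours in which each colour class meets every edge in at most one vertex. -/
noncomputable def strongChrom {V : Type*} [Fintype V] (E : Finset (Finset V)) : ℕ :=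
  sInf {k | ∃ C : V → Fin k, ∀ e ∈ E, ∀ u ∈ e, ∀ v ∈ e, u ≠ v → C u ≠ C v}

/-- If `H` is a simple hypergraph of order `n` with strong chromatic number
`k'`, then `λ_{h,k}(H) ≤ k(n - k') + (k' - 1)h`. -/
theorem lamL_le_of_strongChrom {V : Type*} [Fintype V] (E : Finset (Finset V))
    (h k k' n : ℕ) (hhk : k < h)
    (hn : Fintype.card V = n)
    (hsimple : HSimple E)
    (hchrom : strongChrom E = k') :
    lamL E h k ≤ k * (n - k') + (k' - 1) * h := by

  by_cases hV : Nonempty V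
  case neg =>
    have hemp : IsEmpty V := not_nonempty_iff.mp hV
    have h0 : lamL E h k ≤ 0 := by
      apply Nat.sInf_le
      refine ⟨fun _ => 0, ⟨fun u => (hemp.false u).elim, fun u => (hemp.false u).elim⟩, ?_⟩
      simp [hSpan]
    omega
  case pos =>
  obtain ⟨v₀⟩ := hV
  have hnS : n ∈ {m | ∃ C : V → Fin m, ∀ e ∈ E, ∀ u ∈ e, ∀ v ∈ e, u ≠ v → C u ≠ C v} := by
    refine ⟨fun v => ⟨(Fintype.equivFin V v).val, hn ▸ (Fintype.equivFin V v).isLt⟩, ?_⟩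
    intro e _ u _ v _ huv hcon
    have h2 := congrArg Fin.val hcon
    simp only at h2
    exact huv ((Fintype.equivFin V).injective (Fin.ext h2))
  have hk'S : k' ∈ {m | ∃ C : V → Fin m, ∀ e ∈ E, ∀ u ∈ e, ∀ v ∈ e, u ≠ v → C u ≠ C v} := by
    rw [← hchrom]
    exact Nat.sInf_mem ⟨n, hnS⟩
  obtain ⟨C, hC⟩ := hk'S
  have hk'n : k' ≤ n := hchrom ▸ Nat.sInf_le hnS
  have hk'1 : 1 ≤ k' := by have := (C v₀).isLt; omega
  set ι : V → ℕ := fun v => (Fintype.equivFin V v : ℕ) with hι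
  have hιinj : Function.Injective ι := by
    intro a b hab
    exact (Fintype.equivFin V).injective (Fin.ext hab)
  obtain ⟨d, hd, hd1⟩ : ∃ d, h = k + d ∧ 0 < d := ⟨h - k, by omega, by omega⟩
  set c : V → ℕ := fun v => (C v : ℕ) with hc
  set P : V → V → Prop := fun u v => c u < c v ∨ (c u = c v ∧ ι u < ι v) with hP
  set r : V → ℕ := fun v => (Finset.univ.filter (fun u => P u v)).card with hr
  set f : V → ℕ := fun v => k * r v + d * c v with hf
  have hCne : ∀ u v : V, C u ≠ C v → c u ≠ c v := by
    intro u v h1 h2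
    exact h1 (Fin.ext h2)
  have hrank : ∀ u v : V, P u v → r u < r v := by
    intro u v huv
    apply Finset.card_lt_card
    constructor
    · intro x hx
      simp only [Finset.mem_filter, Finset.mem_univ, true_and] at hx ⊢
      rcases hx with h1 | ⟨h1, h2⟩ <;> rcases huv with h3 | ⟨h3, h4⟩ <;>
        simp only [hP] <;> omega
    · intro hsub
      have := hsub (Finset.mem_filter.mpr ⟨Finset.mem_univ u, huv⟩)
      simp only [Finset.mem_filter, hP] at this
      omega
  have main1 : ∀ u v : V, c u < c v → f u + h ≤ f v := by
    intro u v huv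
    have h1 := hrank u v (Or.inl huv)
    simp only [hf]
    have h2 : k * (r u + 1) ≤ k * r v := Nat.mul_le_mul le_rfl h1
    have h3 : d * (c u + 1) ≤ d * c v := Nat.mul_le_mul le_rfl huv
    nlinarith
  have main2 : ∀ u v : V, c u = c v → ι u < ι v → f u + k ≤ f v := by
    intro u v h1 h2
    have h3 := hrank u v (Or.inr ⟨h1, h2⟩)
    simp only [hf]
    have h4 : k * (r u + 1) ≤ k * r v := Nat.mul_le_mul le_rfl h3
    nlinarith
  have hcol : IsLColoring E h k f := by
    constructor
    · intro u v huv ⟨e, he, hu, hv⟩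
      have hne := hCne u v (hC e he u hu v hv huv)
      rcases Nat.lt_or_ge (c u) (c v) with h1 | h1
      · have := main1 u v h1
        simp only [hDist]; omega
      · have h2 : c v < c u := by omega
        have := main1 v u h2
        simp only [hDist]; omega
    · intro u v huv _
      rcases Nat.lt_trichotomy (c u) (c v) with h1 | h1 | h1
      · have := main1 u v h1
        simp only [hDist]; omega
      · have h2 : ι u ≠ ι v := fun he => huv (hιinj he)
        rcases Nat.lt_or_ge (ι u) (ι v) with h3 | h3
        · have := main2 u v h1 h3
          simp only [hDist]; omega
        · have := main2 v u h1.symm (by omega)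
          simp only [hDist]; omega
      · have := main1 v u h1
        simp only [hDist]; omega
  have hbound : ∀ v : V, f v ≤ k * (n - k') + (k' - 1) * h := by
    intro v
    have hrv : r v ≤ n - 1 := by
      have hsub : Finset.univ.filter (fun u => P u v) ⊆ Finset.univ.erase v := by
        intro x hx
        simp only [Finset.mem_filter, hP] at hx
        refine Finset.mem_erase.mpr ⟨?_, Finset.mem_univ x⟩
        rintro rfl
        omega
      calc r v ≤ (Finset.univ.erase v).card := Finset.card_le_card hsub
        _ = n - 1 := by rw [Finset.card_erase_of_mem (Finset.mem_univ v), Finset.card_univ, hn]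
    have hcv : c v ≤ k' - 1 := by have := (C v).isLt; simp only [hc]; omega
    obtain ⟨a, ha⟩ : ∃ a, n = a + k' := ⟨n - k', by omega⟩
    obtain ⟨b, hb⟩ : ∃ b, k' = b + 1 := ⟨k' - 1, by omega⟩
    have e1 : n - k' = a := by omega
    have e2 : k' - 1 = b := by omega
    have hrv' : r v ≤ a + b := by omega
    have hcv' : c v ≤ b := by omega
    simp only [hf, e1, e2]
    have h4 : k * r v ≤ k * (a + b) := Nat.mul_le_mul le_rfl hrv'
    have h5 : d * c v ≤ d * b := Nat.mul_le_mul le_rfl hcv'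
    have h7 : b * h = b * k + b * d := by rw [hd]; ring
    nlinarith
  have hspan : hSpan f ≤ k * (n - k') + (k' - 1) * h := by
    calc hSpan f ≤ Finset.univ.sup f := Nat.sub_le _ _
      _ ≤ k * (n - k') + (k' - 1) * h := Finset.sup_le fun v _ => hbound v
  calc lamL E h k ≤ hSpan f := Nat.sInf_le ⟨f, hcol, rfl⟩
    _ ≤ _ := hspan
end

section
/- If H is an r-uniform simple hypergraph with maximum degree Δ and at least one edge, then λ_{h+1,1}(H)/λ_{h,1}(H) tends to 1 as the integer h tends to infinity. -/
open scoped Classical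

section Aux
variable {V : Type*} [Fintype V]

lemma hDist_le_hSpan (f : V → ℕ) (u v : V) : hDist f u v ≤ hSpan f := by
  have h1 : f u ≤ Finset.univ.sup f := Finset.le_sup (Finset.mem_univ u)
  have h2 : f v ≤ Finset.univ.sup f := Finset.le_sup (Finset.mem_univ v)
  have h3 : sInf (Set.range f) ≤ f u := Nat.sInf_le ⟨u, rfl⟩
  have h4 : sInf (Set.range f) ≤ f v := Nat.sInf_le ⟨v, rfl⟩
  unfold hDist hSpan
  omega

lemma lcol_set_nonempty (E : Finset (Finset V)) (h : ℕ) :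
    {s | ∃ f : V → ℕ, IsLColoring E h 1 f ∧ hSpan f = s}.Nonempty := by
  refine ⟨_, fun v => (h + 1) * ((Fintype.equivFin V) v : ℕ), ?_, rfl⟩
  have key : ∀ u v : V, u ≠ v →
      h + 1 ≤ hDist (fun v => (h + 1) * ((Fintype.equivFin V) v : ℕ)) u v := by
    intro u v huv
    have hne : ((Fintype.equivFin V) u : ℕ) ≠ ((Fintype.equivFin V) v : ℕ) := by
      intro hcontra
      exact huv ((Fintype.equivFin V).injective (Fin.val_injective hcontra))
    unfold hDist
    push_cast
    rw [← mul_sub, Int.natAbs_mul]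
    have h2 : (((h : ℤ)) + 1).natAbs = h + 1 := by omega
    have h3 : 1 ≤ (((((Fintype.equivFin V) u : ℕ)) : ℤ) - (((Fintype.equivFin V) v : ℕ) : ℤ)).natAbs := by
      omega
    rw [h2]
    exact Nat.le_mul_of_pos_right _ (by omega)
  exact ⟨fun u v huv _ => le_trans (Nat.le_succ h) (key u v huv),
    fun u v huv _ => le_trans (by omega) (key u v huv)⟩

lemma lamL_mem (E : Finset (Finset V)) (h : ℕ) :
    ∃ f : V → ℕ, IsLColoring E h 1 f ∧ hSpan f = lamL E h 1 :=
  Nat.sInf_mem (lcol_set_nonempty E h)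

lemma le_lamL (E : Finset (Finset V)) (h : ℕ)
    (hE : ∃ e ∈ E, 2 ≤ e.card) : h ≤ lamL E h 1 := by
  obtain ⟨f, hf, hspan⟩ := lamL_mem E h
  obtain ⟨e, he, hcard⟩ := hE
  obtain ⟨u, hu, v, hv, huv⟩ := Finset.one_lt_card.mp hcard
  calc h ≤ hDist f u v := hf.1 u v huv ⟨e, he, hu, hv⟩
    _ ≤ hSpan f := hDist_le_hSpan f u v
    _ = lamL E h 1 := hspan

lemma lamL_mono (E : Finset (Finset V)) (h : ℕ) :
    lamL E h 1 ≤ lamL E (h + 1) 1 := by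
  obtain ⟨f, hf, hspan⟩ := lamL_mem E (h + 1)
  exact hspan ▸ Nat.sInf_le ⟨f, ⟨fun u v huv he => le_trans (Nat.le_succ h) (hf.1 u v huv he),
    hf.2⟩, rfl⟩

lemma lamL_step [Nonempty V] (E : Finset (Finset V)) (h : ℕ) (hh : 1 ≤ h) :
    lamL E (h + 1) 1 ≤ lamL E h 1 + (Fintype.card V - 1) := by
  obtain ⟨f, hf, hspan⟩ := lamL_mem E h
  set R : Finset ℕ := Finset.image f Finset.univ with hR
  set rk : V → ℕ := fun v => (R.filter (fun x => x < f v)).card with hrk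
  have hrk_lt : ∀ u v : V, f u < f v → rk u < rk v := by
    intro u v huv
    simp only [hrk]
    apply Finset.card_lt_card
    constructor
    · intro x hx
      obtain ⟨hxR, hxlt⟩ := Finset.mem_filter.mp hx
      exact Finset.mem_filter.mpr ⟨hxR, lt_trans hxlt huv⟩
    · intro hsub
      have : f u ∈ R.filter (fun x => x < f v) :=
        Finset.mem_filter.mpr ⟨Finset.mem_image_of_mem f (Finset.mem_univ u), huv⟩
      have := Finset.mem_filter.mp (hsub this)
      omega
  have hrk_le : ∀ v : V, rk v ≤ Fintype.card V - 1 := by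
    intro v
    have h1 : R.filter (fun x => x < f v) ⊆ R.erase (f v) := by
      intro x hx
      obtain ⟨hxR, hxlt⟩ := Finset.mem_filter.mp hx
      exact Finset.mem_erase.mpr ⟨by omega, hxR⟩
    have h2 : (R.erase (f v)).card ≤ R.card - 1 := by
      have : f v ∈ R := Finset.mem_image_of_mem f (Finset.mem_univ v)
      rw [Finset.card_erase_of_mem this]
    have h3 : R.card ≤ Fintype.card V := by
      calc R.card ≤ Finset.univ.card := Finset.card_image_le
        _ = Fintype.card V := Finset.card_univ
    calc rk v ≤ (R.erase (f v)).card := Finset.card_le_card h1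
      _ ≤ R.card - 1 := h2
      _ ≤ Fintype.card V - 1 := by omega
  set g : V → ℕ := fun v => f v + rk v with hg
  have key : ∀ u v : V, f u ≠ f v → hDist f u v + 1 ≤ hDist g u v := by
    intro u v hne
    rcases Nat.lt_or_ge (f u) (f v) with hlt | hge
    · have := hrk_lt u v hlt
      unfold hDist; simp only [hg]; push_cast; omega
    · have hlt : f v < f u := by omega
      have := hrk_lt v u hlt
      unfold hDist; simp only [hg]; push_cast; omega
  have hgcol : IsLColoring E (h + 1) 1 g := by
    constructor
    · intro u v huv he
      have h1 := hf.1 u v huv he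
      have hne : f u ≠ f v := by
        intro hc; rw [show hDist f u v = 0 by unfold hDist; omega] at h1; omega
      have := key u v hne
      omega
    · intro u v huv he
      have h1 := hf.2 u v huv he
      have hne : f u ≠ f v := by
        intro hc; rw [show hDist f u v = 0 by unfold hDist; omega] at h1; omega
      have := key u v hne
      omega
  have hspan_g : hSpan g ≤ hSpan f + (Fintype.card V - 1) := by
    obtain ⟨v0⟩ := ‹Nonempty V›
    have hsup : Finset.univ.sup g ≤ Finset.univ.sup f + (Fintype.card V - 1) := by
      apply Finset.sup_le
      intro v _
      have h1 : f v ≤ Finset.univ.sup f := Finset.le_sup (Finset.mem_univ v)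
      have := hrk_le v
      simp only [hg]; omega
    have hinf : sInf (Set.range f) ≤ sInf (Set.range g) := by
      apply le_csInf (Set.range_nonempty g)
      rintro b ⟨v, rfl⟩
      calc sInf (Set.range f) ≤ f v := Nat.sInf_le ⟨v, rfl⟩
        _ ≤ g v := Nat.le_add_right _ _
    have h1 : sInf (Set.range f) ≤ f v0 := Nat.sInf_le ⟨v0, rfl⟩
    have h2 : f v0 ≤ Finset.univ.sup f := Finset.le_sup (Finset.mem_univ v0)
    unfold hSpan
    omega
  calc lamL E (h + 1) 1 ≤ hSpan g := Nat.sInf_le ⟨g, hgcol, rfl⟩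
    _ ≤ hSpan f + (Fintype.card V - 1) := hspan_g
    _ = lamL E h 1 + (Fintype.card V - 1) := by rw [hspan]

end Aux

theorem tendsto_lamL_ratio' {V : Type*} [Fintype V] (E : Finset (Finset V))
    (hsimple : ∀ e ∈ E, 2 ≤ e.card)
    (hE : E.Nonempty) :
    Filter.Tendsto (fun h : ℕ => (lamL E (h + 1) 1 : ℝ) / (lamL E h 1 : ℝ))
      Filter.atTop (nhds 1) := by
  obtain ⟨e0, he0⟩ := hE
  have hcard2 : 2 ≤ e0.card := hsimple e0 he0
  have hVne : Nonempty V := by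
    obtain ⟨v, hv⟩ := Finset.card_pos.mp (by omega : 0 < e0.card)
    exact ⟨v⟩
  have hE2 : ∃ e ∈ E, 2 ≤ e.card := ⟨e0, he0, hcard2⟩
  set c : ℝ := ((Fintype.card V - 1 : ℕ) : ℝ) with hc
  have hcnn : 0 ≤ c := Nat.cast_nonneg _
  have key : ∀ h : ℕ, 1 ≤ h →
      (1 : ℝ) ≤ (lamL E (h + 1) 1 : ℝ) / (lamL E h 1 : ℝ) ∧
      (lamL E (h + 1) 1 : ℝ) / (lamL E h 1 : ℝ) ≤ 1 + c / h := by
    intro h hh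
    have hLh : h ≤ lamL E h 1 := le_lamL E h hE2
    have hLpos : (0 : ℝ) < (lamL E h 1 : ℝ) := by
      have : 0 < lamL E h 1 := by omega
      exact_mod_cast this
    have hhpos : (0 : ℝ) < (h : ℝ) := by exact_mod_cast hh
    have hmono : (lamL E h 1 : ℝ) ≤ (lamL E (h + 1) 1 : ℝ) := by
      exact_mod_cast lamL_mono E h
    have hstep : (lamL E (h + 1) 1 : ℝ) ≤ (lamL E h 1 : ℝ) + c := by
      have := lamL_step E h hh
      rw [hc]
      push_cast [this]
      exact_mod_cast this
    constructor
    · exact (one_le_div hLpos).mpr hmono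
    · calc (lamL E (h + 1) 1 : ℝ) / (lamL E h 1 : ℝ)
          ≤ ((lamL E h 1 : ℝ) + c) / (lamL E h 1 : ℝ) :=
            (div_le_div_iff_of_pos_right hLpos).mpr hstep
        _ = 1 + c / (lamL E h 1 : ℝ) := by
            rw [add_div, div_self hLpos.ne']
        _ ≤ 1 + c / (h : ℝ) := by
            have : (h : ℝ) ≤ (lamL E h 1 : ℝ) := by exact_mod_cast hLh
            exact add_le_add_right (div_le_div_of_nonneg_left hcnn hhpos this) 1
  have htend : Filter.Tendsto (fun h : ℕ => 1 + c / (h : ℝ)) Filter.atTop (nhds 1) := by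
    have h0 := tendsto_const_div_atTop_nhds_zero_nat c
    simpa using tendsto_const_nhds.add h0
  refine tendsto_of_tendsto_of_tendsto_of_le_of_le' tendsto_const_nhds htend ?_ ?_
  · filter_upwards [Filter.eventually_ge_atTop 1] with h hh using (key h hh).1
  · filter_upwards [Filter.eventually_ge_atTop 1] with h hh using (key h hh).2

/-- If `H` is an `r`-uniform simple hypergraph with maximum degree `Δ` and
at least one edge, then `λ_{h+1,1}(H) / λ_{h,1}(H) → 1` as `h → ∞`. -/
theorem tendsto_lamL_ratio {V : Type*} [Fintype V] (E : Finset (Finset V))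
    (r Δ : ℕ)
    (hsimple : HSimple E)
    (hunif : ∀ e ∈ E, e.card = r)
    (hΔ : Finset.univ.sup (fun v : V => hDeg E v) = Δ)
    (hE : E.Nonempty) :
    Filter.Tendsto (fun h : ℕ => (lamL E (h + 1) 1 : ℝ) / (lamL E h 1 : ℝ))
      Filter.atTop (nhds 1) := by
  exact tendsto_lamL_ratio' E hsimple.1 hE
end

section
/- Let H be a simple hypergraph and let s be an integer with 2 < s ≤ rank(H). Then for any nonnegative integers h > k, λ_{h,k}(H) = λ_{h,k}([H]_s), where [H]_s is the s-section of H. -/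
open scoped Classical

/-- The `s`-section of a hypergraph: its edges are the `s`-element subsets of edges of `H`
together with the edges of `H` of cardinality less than `s`. -/
noncomputable def sSection {V : Type*} [Fintype V] (E : Finset (Finset V)) (s : ℕ) :
    Finset (Finset V) :=
  Finset.univ.powerset.filter
    (fun e' => (∃ e ∈ E, e' ⊆ e ∧ e'.card = s) ∨ (e' ∈ E ∧ e'.card < s))

/-- For a simple hypergraph `H` and `2 < s ≤ rank H`,
`λ_{h,k}(H) = λ_{h,k}([H]_s)`. -/
theorem lamL_eq_lamL_sSection {V : Type*} [Fintype V] (E : Finset (Finset V))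
    (s h k : ℕ) (hhk : k < h)
    (hsimple : HSimple E)
    (hs : 2 < s) (hsr : s ≤ E.sup Finset.card) :
    lamL E h k = lamL (sSection E s) h k := by
  -- subsets of edges extend to edges of the s-section
  have hup : ∀ t : Finset V, ∀ e ∈ E, t ⊆ e → t.card ≤ s →
      ∃ e' ∈ sSection E s, t ⊆ e' := by
    intro t e he hte htc
    by_cases hcs : e.card < s
    · exact ⟨e, by simp [sSection, Or.inr, he, hcs], hte⟩
    · obtain ⟨u, htu, hue, huc⟩ :=
        Finset.exists_subsuperset_card_eq hte htc (le_of_not_gt hcs)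
      exact ⟨u, by
        simp only [sSection, Finset.mem_filter, Finset.mem_powerset]
        exact ⟨u.subset_univ, Or.inl ⟨e, he, hue, huc⟩⟩, htu⟩
  -- edges of the s-section are contained in edges of E
  have hdown : ∀ e' ∈ sSection E s, ∃ e ∈ E, e' ⊆ e := by
    intro e' he'
    simp only [sSection, Finset.mem_filter] at he'
    rcases he'.2 with ⟨e, he, hsub, -⟩ | ⟨he, -⟩
    · exact ⟨e, he, hsub⟩
    · exact ⟨e', he, le_refl _⟩
  have key : ∀ f : V → ℕ, IsLColoring E h k f ↔ IsLColoring (sSection E s) h k f := by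
    intro f
    constructor
    · rintro ⟨h1, h2⟩
      constructor
      · intro u v huv ⟨e', he', hu, hv⟩
        obtain ⟨e, he, hsub⟩ := hdown e' he'
        exact h1 u v huv ⟨e, he, hsub hu, hsub hv⟩
      · intro u v huv ⟨e₁', he₁', e₂', he₂', hu, hv, hne⟩
        obtain ⟨e₁, he₁, hs₁⟩ := hdown e₁' he₁'
        obtain ⟨e₂, he₂, hs₂⟩ := hdown e₂' he₂'
        refine h2 u v huv ⟨e₁, he₁, e₂, he₂, hs₁ hu, hs₂ hv, ?_⟩
        obtain ⟨w, hw⟩ := hne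
        simp only [Finset.mem_sdiff, Finset.mem_inter] at hw
        refine ⟨w, ?_⟩
        simp only [Finset.mem_sdiff, Finset.mem_inter]
        exact ⟨⟨hs₁ hw.1.1, hs₂ hw.1.2⟩, hw.2⟩
    · rintro ⟨h1, h2⟩
      constructor
      · intro u v huv ⟨e, he, hu, hv⟩
        have hsub : ({u, v} : Finset V) ⊆ e := by
          intro x hx
          simp only [Finset.mem_insert, Finset.mem_singleton] at hx
          rcases hx with rfl | rfl <;> assumption
        have hcard : ({u, v} : Finset V).card ≤ s :=
          le_trans (Finset.card_insert_le _ _) (by simp; omega)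
        obtain ⟨e', he', hsub'⟩ := hup _ e he hsub hcard
        exact h1 u v huv ⟨e', he', hsub' (by simp), hsub' (by simp)⟩
      · intro u v huv ⟨e₁, he₁, e₂, he₂, hu, hv, w, hw⟩
        simp only [Finset.mem_sdiff, Finset.mem_inter, Finset.mem_insert,
          Finset.mem_singleton, not_or] at hw
        have hs₁ : ({u, w} : Finset V) ⊆ e₁ := by
          intro x hx
          simp only [Finset.mem_insert, Finset.mem_singleton] at hx
          rcases hx with rfl | rfl
          · exact hu
          · exact hw.1.1
        have hs₂ : ({v, w} : Finset V) ⊆ e₂ := by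
          intro x hx
          simp only [Finset.mem_insert, Finset.mem_singleton] at hx
          rcases hx with rfl | rfl
          · exact hv
          · exact hw.1.2
        have hc : ∀ a b : V, ({a, b} : Finset V).card ≤ s :=
          fun a b => le_trans (Finset.card_insert_le _ _) (by simp; omega)
        obtain ⟨e₁', he₁', hsub₁⟩ := hup _ e₁ he₁ hs₁ (hc u w)
        obtain ⟨e₂', he₂', hsub₂⟩ := hup _ e₂ he₂ hs₂ (hc v w)
        refine h2 u v huv ⟨e₁', he₁', e₂', he₂', hsub₁ (by simp), hsub₂ (by simp), ?_⟩
        refine ⟨w, ?_⟩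
        simp only [Finset.mem_sdiff, Finset.mem_inter, Finset.mem_insert,
          Finset.mem_singleton, not_or]
        exact ⟨⟨hsub₁ (by simp), hsub₂ (by simp)⟩, hw.2⟩
  unfold lamL
  congr 1
  ext n
  simp only [Set.mem_setOf_eq]
  constructor
  · rintro ⟨f, hf, hsp⟩; exact ⟨f, (key f).mp hf, hsp⟩
  · rintro ⟨f, hf, hsp⟩; exact ⟨f, (key f).mpr hf, hsp⟩
end

section
/- Let P^m_r be an r-uniform hyperpath with m edges, where r ≥ 3. Then λ(P^m_r) = 2r - 2 if m = 1, λ(P^m_r) = 2r - 1 if m = 2, and λ(P^m_r) = 2r if m ≥ 3, where λ denotes the L(2,1)-chromatic number. -/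
open scoped Classical

/-- `IsHyperpath E r m e w` : `E` is the edge family of an `r`-uniform hyperpath with `m`
edges `e 0, …, e (m-1)` on the whole vertex type, where consecutive edges meet exactly in the
single vertex `w i` and non-consecutive edges are disjoint. -/
def IsHyperpath {V : Type*} (E : Finset (Finset V)) (r m : ℕ)
    (e : ℕ → Finset V) (w : ℕ → V) : Prop :=
  E = (Finset.range m).image e ∧
    (∀ i < m, (e i).card = r) ∧
    (∀ i j, i < j → j < m → j ≠ i + 1 → e i ∩ e j = ∅) ∧
    (∀ i, i + 1 < m → e i ∩ e (i + 1) = {w i}) ∧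
    (∀ x : V, ∃ i < m, x ∈ e i)


open Finset

lemma pack_lemma (S : Finset ℕ) (lo hi : ℕ) (hS : ∀ a ∈ S, lo ≤ a ∧ a ≤ hi)
    (hgap : ∀ a ∈ S, ∀ b ∈ S, a ≠ b → a + 2 ≤ b ∨ b + 2 ≤ a) (hne : S.Nonempty) :
    2 * S.card + lo ≤ hi + 2 := by
  have hcard : S.card ≤ (hi - lo)/2 + 1 := by
    have := Finset.card_le_card_of_injOn (t := Finset.range ((hi - lo)/2 + 1)) (fun x => (x - lo)/2)
      (fun x hx => by
        show (x - lo)/2 ∈ Finset.range ((hi - lo)/2 + 1)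
        have := hS x hx; rw [Finset.mem_range]; omega)
      (by
        intro a ha b hb hab
        by_contra hne'
        have hab' : (a - lo)/2 = (b - lo)/2 := hab
        rcases hgap a ha b hb hne' with h | h <;>
          · have h1 := hS a ha; have h2 := hS b hb; omega)
    simpa using this
  obtain ⟨a, ha⟩ := hne
  have := hS a ha
  omega

lemma exact_pack : ∀ (k : ℕ) (a : ℕ) (S : Finset ℕ),
    (∀ x ∈ S, a ≤ x ∧ x ≤ a + 2*k) → S.card = k + 1 →
    (∀ x ∈ S, ∀ y ∈ S, x ≠ y → x + 2 ≤ y ∨ y + 2 ≤ x) →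
    ∀ x, x ∈ S ↔ ∃ i, i ≤ k ∧ x = a + 2*i := by
  intro k
  induction k with
  | zero =>
    intro a S hb hc hg x
    constructor
    · intro hx; exact ⟨0, le_refl _, by have := hb x hx; omega⟩
    · rintro ⟨i, hi, rfl⟩
      have : 0 < S.card := by omega
      obtain ⟨y, hy⟩ := Finset.card_pos.1 this
      have := hb y hy
      have : y = a + 2*i := by omega
      exact this ▸ hy
  | succ k ih =>
    intro a S hb hc hg x
    have haS : a ∈ S := by
      by_contra ha
      have h2 : ∀ x ∈ S, a + 1 ≤ x ∧ x ≤ a + 2*(k+1) := by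
        intro x hx
        have := hb x hx
        rcases Nat.eq_or_lt_of_le this.1 with h | h
        · exact absurd (h ▸ hx) ha
        · omega
      have hne : S.Nonempty := Finset.card_pos.1 (by omega)
      have := pack_lemma S (a+1) (a + 2*(k+1)) h2 hg hne
      omega
    have herase : ∀ x ∈ S.erase a, a + 2 ≤ x ∧ x ≤ (a+2) + 2*k := by
      intro x hx
      have hxS := Finset.mem_of_mem_erase hx
      have hxa := Finset.ne_of_mem_erase hx
      have := hb x hxS
      rcases hg x hxS a haS hxa with h | h <;> omega
    have hcard' : (S.erase a).card = k + 1 := by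
      rw [Finset.card_erase_of_mem haS]; omega
    have hg' : ∀ x ∈ S.erase a, ∀ y ∈ S.erase a, x ≠ y → x + 2 ≤ y ∨ y + 2 ≤ x :=
      fun x hx y hy => hg x (Finset.mem_of_mem_erase hx) y (Finset.mem_of_mem_erase hy)
    have ihx := ih (a+2) (S.erase a) herase hcard' hg'
    constructor
    · intro hx
      by_cases hxa : x = a
      · exact ⟨0, by omega, by omega⟩
      · obtain ⟨i, hi, hxi⟩ := (ihx x).1 (Finset.mem_erase.2 ⟨hxa, hx⟩)
        exact ⟨i + 1, by omega, by omega⟩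
    · rintro ⟨i, hi, rfl⟩
      by_cases hi0 : i = 0
      · subst hi0; simpa using haS
      · have : a + 2*i = (a+2) + 2*(i-1) := by omega
        rw [this]
        have : (a+2) + 2*(i-1) ∈ S.erase a := (ihx _).2 ⟨i-1, by omega, rfl⟩
        exact Finset.mem_of_mem_erase this

noncomputable def fIdx {V : Type*} (S : Finset V) (v : V) : ℕ :=
  if h : v ∈ S then ((S.equivFin ⟨v, h⟩ : Fin S.card) : ℕ) else 0

lemma fIdx_lt {V : Type*} {S : Finset V} {v : V} (h : v ∈ S) : fIdx S v < S.card := by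
  rw [fIdx, dif_pos h]; exact (S.equivFin ⟨v, h⟩).isLt

lemma fIdx_inj {V : Type*} {S : Finset V} {u v : V} (hu : u ∈ S) (hv : v ∈ S)
    (h : fIdx S u = fIdx S v) : u = v := by
  rw [fIdx, dif_pos hu, fIdx, dif_pos hv] at h
  have := S.equivFin.injective (Fin.ext h)
  exact Subtype.ext_iff.1 this

lemma fIdx_surj {V : Type*} {S : Finset V} {k : ℕ} (h : k < S.card) :
    ∃ v ∈ S, fIdx S v = k := by
  refine ⟨(S.equivFin.symm ⟨k, h⟩ : S), (S.equivFin.symm ⟨k, h⟩).2, ?_⟩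
  rw [fIdx, dif_pos]
  have : (⟨(S.equivFin.symm ⟨k, h⟩ : S), (S.equivFin.symm ⟨k, h⟩).2⟩ : {x // x ∈ S}) = S.equivFin.symm ⟨k, h⟩ := Subtype.ext rfl
  rw [this, Equiv.apply_symm_apply]
  exact (S.equivFin.symm ⟨k, h⟩).2

section Path
variable {V : Type*} {E : Finset (Finset V)} {r m : ℕ} {e : ℕ → Finset V} {w : ℕ → V}

lemma hDist_comm {f : V → ℕ} (u v : V) : hDist f u v = hDist f v u := by
  unfold hDist; omega

lemma w_mem (hcons : ∀ i, i + 1 < m → e i ∩ e (i + 1) = {w i}) {i : ℕ} (h : i + 1 < m) :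
    w i ∈ e i ∧ w i ∈ e (i+1) := by
  have : w i ∈ e i ∩ e (i+1) := by rw [hcons i h]; exact Finset.mem_singleton_self _
  exact ⟨(Finset.mem_inter.1 this).1, (Finset.mem_inter.1 this).2⟩

lemma path_disj (hdisj : ∀ i j, i < j → j < m → j ≠ i + 1 → e i ∩ e j = ∅)
    (hcons : ∀ i, i + 1 < m → e i ∩ e (i + 1) = {w i})
    {i j : ℕ} (hi : i < m) (hj : j < m) (hij : i ≠ j) {x : V}
    (hxi : x ∈ e i) (hxj : x ∈ e j) :
    (j = i + 1 ∧ x = w i) ∨ (i = j + 1 ∧ x = w j) := by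
  rcases Nat.lt_or_ge i j with h | h
  · left
    by_cases hc : j = i + 1
    · subst hc
      refine ⟨rfl, ?_⟩
      have : x ∈ e i ∩ e (i+1) := Finset.mem_inter.2 ⟨hxi, hxj⟩
      rw [hcons i hj] at this
      exact Finset.mem_singleton.1 this
    · exact absurd (Finset.mem_inter.2 ⟨hxi, hxj⟩) (by rw [hdisj i j h hj hc]; simp)
  · have h' : j < i := lt_of_le_of_ne h (Ne.symm hij)
    right
    by_cases hc : i = j + 1
    · subst hc
      refine ⟨rfl, ?_⟩
      have : x ∈ e j ∩ e (j+1) := Finset.mem_inter.2 ⟨hxj, hxi⟩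
      rw [hcons j hi] at this
      exact Finset.mem_singleton.1 this
    · exact absurd (Finset.mem_inter.2 ⟨hxj, hxi⟩) (by rw [hdisj j i h' hi hc]; simp)

/-- characterization of `IsLColoring` for hyperpaths -/
lemma col_iff (hE : E = (Finset.range m).image e)
    (hdisj : ∀ i j, i < j → j < m → j ≠ i + 1 → e i ∩ e j = ∅)
    (hcons : ∀ i, i + 1 < m → e i ∩ e (i + 1) = {w i})
    (f : V → ℕ) :
    IsLColoring E 2 1 f ↔
      ((∀ i < m, ∀ u ∈ e i, ∀ v ∈ e i, u ≠ v → 2 ≤ hDist f u v) ∧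
       (∀ i, i + 1 < m → ∀ u ∈ e i, ∀ v ∈ e (i+1),
          u ≠ w i → v ≠ w i → u ≠ v → 1 ≤ hDist f u v)) := by
  have heE : ∀ i < m, e i ∈ E := by
    intro i hi; rw [hE]; exact Finset.mem_image.2 ⟨i, Finset.mem_range.2 hi, rfl⟩
  constructor
  · intro ⟨h2, h1⟩
    constructor
    · intro i hi u hu v hv huv
      exact h2 u v huv ⟨e i, heE i hi, hu, hv⟩
    · intro i hi u hu v hv huw hvw huv
      refine h1 u v huv ⟨e i, heE i (by omega), e (i+1), heE _ hi, hu, hv, ?_⟩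
      refine ⟨w i, ?_⟩
      rw [hcons i hi]
      simp [huw.symm, hvw.symm]
  · intro ⟨h2, h1⟩
    constructor
    · rintro u v huv ⟨ed, hed, hu, hv⟩
      rw [hE] at hed
      obtain ⟨i, hi, rfl⟩ := Finset.mem_image.1 hed
      exact h2 i (Finset.mem_range.1 hi) u hu v hv huv
    · rintro u v huv ⟨e₁, he₁, e₂, he₂, hu, hv, hne⟩
      rw [hE] at he₁ he₂
      obtain ⟨i, hi, rfl⟩ := Finset.mem_image.1 he₁
      obtain ⟨j, hj, rfl⟩ := Finset.mem_image.1 he₂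
      rw [Finset.mem_range] at hi hj
      obtain ⟨x, hx⟩ := hne
      rw [Finset.mem_sdiff, Finset.mem_inter] at hx
      obtain ⟨⟨hxi, hxj⟩, hxuv⟩ := hx
      simp only [Finset.mem_insert, Finset.mem_singleton] at hxuv
      push_neg at hxuv
      by_cases hij : i = j
      · subst hij
        have := h2 i hi u hu v hv huv
        omega
      · rcases path_disj hdisj hcons hi hj hij hxi hxj with ⟨hji, hxw⟩ | ⟨hij', hxw⟩
        · subst hji; subst hxw
          exact h1 i hj u hu v hv (fun h => hxuv.1 h.symm) (fun h => hxuv.2 h.symm) huv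
        · subst hij'; subst hxw
          have := h1 j hi v hv u hu (fun h => hxuv.2 h.symm) (fun h => hxuv.1 h.symm) huv.symm
          rw [hDist_comm] at this
          exact this
end Path

section Lower
variable {V : Type*} {E : Finset (Finset V)} {r m : ℕ} {e : ℕ → Finset V} {w : ℕ → V}

/-- injectivity of a colouring on the union of two consecutive edges -/
lemma inj_union (hdisj : ∀ i j, i < j → j < m → j ≠ i + 1 → e i ∩ e j = ∅)
    (hcons : ∀ i, i + 1 < m → e i ∩ e (i + 1) = {w i}) {f : V → ℕ}
    (hstrong : ∀ i < m, ∀ u ∈ e i, ∀ v ∈ e i, u ≠ v → 2 ≤ hDist f u v)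
    (hweak : ∀ i, i + 1 < m → ∀ u ∈ e i, ∀ v ∈ e (i+1),
        u ≠ w i → v ≠ w i → u ≠ v → 1 ≤ hDist f u v)
    {i : ℕ} (hi : i + 1 < m) :
    ∀ u ∈ e i ∪ e (i+1), ∀ v ∈ e i ∪ e (i+1), u ≠ v → f u ≠ f v := by
  have hwi := w_mem hcons hi
  intro u hu v hv huv
  rw [Finset.mem_union] at hu hv
  have key : 1 ≤ hDist f u v := by
    rcases hu with hu | hu <;> rcases hv with hv | hv
    · have := hstrong i (by omega) u hu v hv huv; omega
    · by_cases huw : u = w i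
      · have := hstrong (i+1) hi u (huw ▸ hwi.2) v hv huv; omega
      · by_cases hvw : v = w i
        · have := hstrong i (by omega) u hu v (hvw ▸ hwi.1) huv; omega
        · exact hweak i hi u hu v hv huw hvw huv
    · by_cases huw : u = w i
      · have := hstrong i (by omega) u (huw ▸ hwi.1) v hv huv; omega
      · by_cases hvw : v = w i
        · have := hstrong (i+1) hi u hu v (hvw ▸ hwi.2) huv; omega
        · have := hweak i hi v hv u hu hvw huw huv.symm
          rw [hDist_comm] at this; omega
    · have := hstrong (i+1) hi u hu v hv huv; omega
  unfold hDist at key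
  omega

lemma card_union_consec (hr : 1 ≤ r) (hcard : ∀ i < m, (e i).card = r)
    (hcons : ∀ i, i + 1 < m → e i ∩ e (i + 1) = {w i}) {i : ℕ} (hi : i + 1 < m) :
    (e i ∪ e (i+1)).card = 2 * r - 1 := by
  have h := Finset.card_union_add_card_inter (e i) (e (i+1))
  rw [hcons i hi, hcard i (by omega), hcard (i+1) hi] at h
  simp at h
  omega

/-- The key contradiction for `m ≥ 3`, assuming `f (w 0)` is the min and `f (w 1)` the max. -/
lemma three_aux (hr : 3 ≤ r) (hm : 3 ≤ m)
    (hdisj : ∀ i j, i < j → j < m → j ≠ i + 1 → e i ∩ e j = ∅)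
    (hcons : ∀ i, i + 1 < m → e i ∩ e (i + 1) = {w i})
    (hcard : ∀ i < m, (e i).card = r)
    {f : V → ℕ} {lo : ℕ}
    (hstrong : ∀ i < m, ∀ u ∈ e i, ∀ v ∈ e i, u ≠ v → 2 ≤ hDist f u v)
    (hweak : ∀ i, i + 1 < m → ∀ u ∈ e i, ∀ v ∈ e (i+1),
        u ≠ w i → v ≠ w i → u ≠ v → 1 ≤ hDist f u v)
    (hbound : ∀ v : V, lo ≤ f v ∧ f v ≤ lo + (2*r - 1))
    (h0 : f (w 0) = lo) (h1 : f (w 1) = lo + (2*r - 1)) : False := by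
  have hw0 := w_mem hcons (show 0 + 1 < m by omega)
  have hw1 := w_mem hcons (show 1 + 1 < m by omega)
  have hw1ne0 : w 1 ∉ e 0 := by
    intro h
    rcases path_disj hdisj hcons (show 0 < m by omega) (show 2 < m by omega)
      (by omega) h hw1.2 with ⟨h', _⟩ | ⟨h', _⟩ <;> omega
  have hw0ne2 : w 0 ∉ e 2 := by
    intro h
    rcases path_disj hdisj hcons (show 0 < m by omega) (show 2 < m by omega)
      (by omega) hw0.1 h with ⟨h', _⟩ | ⟨h', _⟩ <;> omega
  have hw01 : w 0 ≠ w 1 := fun h => hw0ne2 (h ▸ hw1.2)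
  -- the colours used on `e 0 \ {w 0}`
  set S0 := ((e 0).erase (w 0)).image f with hS0
  have hS0b : ∀ x ∈ S0, lo + 2 ≤ x ∧ x ≤ (lo + 2) + 2*(r-2) := by
    intro x hx
    obtain ⟨u, hu, rfl⟩ := Finset.mem_image.1 hx
    have huw := Finset.ne_of_mem_erase hu
    have hue := Finset.mem_of_mem_erase hu
    have hlow2 := hstrong 0 (by omega) u hue (w 0) hw0.1 huw
    have hne1 : f u ≠ f (w 1) := by
      have hnuw1 : u ≠ w 1 := fun h => hw1ne0 (h ▸ hue)
      have := hweak 0 (by omega) u hue (w 1) hw1.1 huw (Ne.symm hw01) hnuw1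
      unfold hDist at this; omega
    have hb := hbound u
    unfold hDist at hlow2
    omega
  have hS0card : S0.card = (r - 2) + 1 := by
    rw [hS0, Finset.card_image_of_injOn, Finset.card_erase_of_mem hw0.1, hcard 0 (by omega)]
    · omega
    · intro u hu v hv huv
      by_contra hne
      have := hstrong 0 (by omega) u (Finset.mem_of_mem_erase hu) v (Finset.mem_of_mem_erase hv) hne
      unfold hDist at this; omega
  have hS0gap : ∀ x ∈ S0, ∀ y ∈ S0, x ≠ y → x + 2 ≤ y ∨ y + 2 ≤ x := by
    intro x hx y hy hxy
    obtain ⟨u, hu, rfl⟩ := Finset.mem_image.1 hx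
    obtain ⟨v, hv, rfl⟩ := Finset.mem_image.1 hy
    have : u ≠ v := fun h => hxy (h ▸ rfl)
    have := hstrong 0 (by omega) u (Finset.mem_of_mem_erase hu) v (Finset.mem_of_mem_erase hv) this
    unfold hDist at this; omega
  have char0 := exact_pack (r-2) (lo+2) S0 hS0b hS0card hS0gap
  -- the colours used on `e 2 \ {w 1}`
  set S2 := ((e 2).erase (w 1)).image f with hS2
  have hS2b : ∀ x ∈ S2, lo + 1 ≤ x ∧ x ≤ (lo + 1) + 2*(r-2) := by
    intro x hx
    obtain ⟨u, hu, rfl⟩ := Finset.mem_image.1 hx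
    have huw := Finset.ne_of_mem_erase hu
    have hue := Finset.mem_of_mem_erase hu
    have hup2 := hstrong 2 (by omega) u hue (w 1) hw1.2 huw
    have hne0 : f u ≠ f (w 0) := by
      have hnuw0 : w 0 ≠ u := fun h => hw0ne2 (h ▸ hue)
      have := hweak 1 (by omega) (w 0) hw0.2 u hue hw01 huw hnuw0
      unfold hDist at this; omega
    have hb := hbound u
    unfold hDist at hup2
    omega
  have hS2card : S2.card = (r - 2) + 1 := by
    rw [hS2, Finset.card_image_of_injOn, Finset.card_erase_of_mem hw1.2, hcard 2 (by omega)]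
    · omega
    · intro u hu v hv huv
      by_contra hne
      have := hstrong 2 (by omega) u (Finset.mem_of_mem_erase hu) v (Finset.mem_of_mem_erase hv) hne
      unfold hDist at this; omega
  have hS2gap : ∀ x ∈ S2, ∀ y ∈ S2, x ≠ y → x + 2 ≤ y ∨ y + 2 ≤ x := by
    intro x hx y hy hxy
    obtain ⟨u, hu, rfl⟩ := Finset.mem_image.1 hx
    obtain ⟨v, hv, rfl⟩ := Finset.mem_image.1 hy
    have : u ≠ v := fun h => hxy (h ▸ rfl)
    have := hstrong 2 (by omega) u (Finset.mem_of_mem_erase hu) v (Finset.mem_of_mem_erase hv) this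
    unfold hDist at this; omega
  have char2 := exact_pack (r-2) (lo+1) S2 hS2b hS2card hS2gap
  -- pick an interior vertex of `e 1`
  have hTcard : (((e 1).erase (w 0)).erase (w 1)).card = r - 2 := by
    rw [Finset.card_erase_of_mem (Finset.mem_erase.2 ⟨Ne.symm hw01, hw1.1⟩),
      Finset.card_erase_of_mem hw0.2, hcard 1 (by omega)]
    omega
  obtain ⟨x, hx⟩ : (((e 1).erase (w 0)).erase (w 1)).Nonempty :=
    Finset.card_pos.1 (by omega)
  have hxw1 : x ≠ w 1 := Finset.ne_of_mem_erase hx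
  have hxw0 : x ≠ w 0 := Finset.ne_of_mem_erase (Finset.mem_of_mem_erase hx)
  have hxe1 : x ∈ e 1 := Finset.mem_of_mem_erase (Finset.mem_of_mem_erase hx)
  have hxlow : lo + 2 ≤ f x := by
    have := hstrong 1 (by omega) x hxe1 (w 0) hw0.2 hxw0
    have := (hbound x).1
    unfold hDist at *; omega
  have hxhigh : f x ≤ lo + 2*r - 3 := by
    have := hstrong 1 (by omega) x hxe1 (w 1) hw1.1 hxw1
    have := (hbound x).2
    unfold hDist at *; omega
  obtain ⟨i, hi⟩ : ∃ i, f x = lo + 2*i ∨ f x = lo + 1 + 2*i := ⟨(f x - lo)/2, by omega⟩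
  rcases hi with hi | hi
  · -- even case: colour appears on `e 0 \ {w 0}`
    have : f x ∈ S0 := (char0 (f x)).2 ⟨i - 1, by omega, by omega⟩
    obtain ⟨u, hu, hfu⟩ := Finset.mem_image.1 this
    have hue := Finset.mem_of_mem_erase hu
    have huw := Finset.ne_of_mem_erase hu
    have hux : u ≠ x := by
      intro h; subst h
      have : u ∈ e 0 ∩ e 1 := Finset.mem_inter.2 ⟨hue, hxe1⟩
      rw [hcons 0 (by omega)] at this
      exact huw (Finset.mem_singleton.1 this)
    have := hweak 0 (by omega) u hue x hxe1 huw hxw0 hux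
    unfold hDist at this; omega
  · -- odd case: colour appears on `e 2 \ {w 1}`
    have : f x ∈ S2 := (char2 (f x)).2 ⟨i, by omega, by omega⟩
    obtain ⟨u, hu, hfu⟩ := Finset.mem_image.1 this
    have hue := Finset.mem_of_mem_erase hu
    have huw := Finset.ne_of_mem_erase hu
    have hux : x ≠ u := by
      intro h; subst h
      have : x ∈ e 1 ∩ e 2 := Finset.mem_inter.2 ⟨hxe1, hue⟩
      rw [hcons 1 (by omega)] at this
      exact hxw1 (Finset.mem_singleton.1 this)
    have := hweak 1 (by omega) x hxe1 u hue hxw1 huw hux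
    unfold hDist at this; omega

lemma span_setup {V : Type*} [Fintype V] {f : V → ℕ} {B : ℕ} (h : hSpan f ≤ B) (v : V) :
    sInf (Set.range f) ≤ f v ∧ f v ≤ sInf (Set.range f) + B := by
  have h1 : sInf (Set.range f) ≤ f v := Nat.sInf_le ⟨v, rfl⟩
  have h2 : f v ≤ Finset.univ.sup f := Finset.le_sup (Finset.mem_univ v)
  unfold hSpan at h
  omega

variable [Fintype V]

lemma low_one (hr : 3 ≤ r) (hm : 1 ≤ m) (hcard : ∀ i < m, (e i).card = r) {f : V → ℕ}
    (hstrong : ∀ i < m, ∀ u ∈ e i, ∀ v ∈ e i, u ≠ v → 2 ≤ hDist f u v) :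
    2*r - 2 ≤ hSpan f := by
  by_contra hc
  push_neg at hc
  have hB : hSpan f ≤ 2*r - 3 := by omega
  set lo := sInf (Set.range f) with hlo
  set S := (e 0).image f with hS
  have hScard : S.card = r := by
    rw [hS, Finset.card_image_of_injOn, hcard 0 (by omega)]
    intro u hu v hv huv
    by_contra hne
    have := hstrong 0 (by omega) u hu v hv hne
    unfold hDist at this; omega
  have hne : S.Nonempty := Finset.card_pos.1 (by omega)
  have := pack_lemma S lo (lo + (2*r-3))
    (by
      rintro a ha
      obtain ⟨u, hu, rfl⟩ := Finset.mem_image.1 ha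
      exact span_setup hB u)
    (by
      rintro a ha b hb hab
      obtain ⟨u, hu, rfl⟩ := Finset.mem_image.1 ha
      obtain ⟨v, hv, rfl⟩ := Finset.mem_image.1 hb
      have : u ≠ v := fun h => hab (h ▸ rfl)
      have := hstrong 0 (by omega) u hu v hv this
      unfold hDist at this; omega) hne
  omega

lemma low_two (hr : 3 ≤ r) (hm : 2 ≤ m)
    (hdisj : ∀ i j, i < j → j < m → j ≠ i + 1 → e i ∩ e j = ∅)
    (hcons : ∀ i, i + 1 < m → e i ∩ e (i + 1) = {w i})
    (hcard : ∀ i < m, (e i).card = r) {f : V → ℕ}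
    (hstrong : ∀ i < m, ∀ u ∈ e i, ∀ v ∈ e i, u ≠ v → 2 ≤ hDist f u v)
    (hweak : ∀ i, i + 1 < m → ∀ u ∈ e i, ∀ v ∈ e (i+1),
        u ≠ w i → v ≠ w i → u ≠ v → 1 ≤ hDist f u v) :
    2*r - 1 ≤ hSpan f := by
  by_contra hc
  push_neg at hc
  have hB : hSpan f ≤ 2*r - 2 := by omega
  set lo := sInf (Set.range f) with hlo
  have hw0 := w_mem hcons (show 0 + 1 < m by omega)
  set U := e 0 ∪ e 1 with hU
  have hUcard : U.card = 2*r - 1 := card_union_consec (by omega) hcard hcons (by omega)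
  have hinj := inj_union hdisj hcons hstrong hweak (show 0 + 1 < m by omega)
  set S := U.image f with hS
  have hScard : S.card = 2*r - 1 := by
    rw [hS, Finset.card_image_of_injOn, hUcard]
    intro u hu v hv huv
    by_contra hne
    exact hinj u hu v hv hne huv
  have hsub : S ⊆ Finset.Icc lo (lo + (2*r-2)) := by
    intro a ha
    obtain ⟨u, hu, rfl⟩ := Finset.mem_image.1 ha
    have := span_setup hB u
    rw [Finset.mem_Icc]; omega
  have heq : S = Finset.Icc lo (lo + (2*r-2)) := by
    apply Finset.eq_of_subset_of_card_le hsub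
    rw [Nat.card_Icc, hScard]; omega
  set c := f (w 0) with hcdef
  have hcmem : c ∈ S := by
    rw [hS]; exact Finset.mem_image.2 ⟨w 0, Finset.mem_union_left _ hw0.1, rfl⟩
  have hcb : lo ≤ c ∧ c ≤ lo + (2*r-2) := by
    have := hsub hcmem; rw [Finset.mem_Icc] at this; exact this
  set d := if c = lo then c + 1 else c - 1 with hd
  have hdmem : d ∈ S := by
    rw [heq, Finset.mem_Icc]
    rcases Nat.eq_or_lt_of_le hcb.1 with h | h
    · rw [hd, if_pos h.symm]; omega
    · rw [hd, if_neg (by omega)]; omega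
  obtain ⟨u, hu, hfu⟩ := Finset.mem_image.1 hdmem
  have huw : u ≠ w 0 := by
    intro h; subst h
    rw [← hcdef] at hfu
    rcases Nat.eq_or_lt_of_le hcb.1 with h | h
    · rw [hd, if_pos h.symm] at hfu; omega
    · rw [hd, if_neg (by omega)] at hfu; omega
  have key : 2 ≤ hDist f u (w 0) := by
    rw [Finset.mem_union] at hu
    rcases hu with hu | hu
    · exact hstrong 0 (by omega) u hu (w 0) hw0.1 huw
    · exact hstrong 1 (by omega) u hu (w 0) hw0.2 huw
  unfold hDist at key
  rcases Nat.eq_or_lt_of_le hcb.1 with h | h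
  · rw [hd, if_pos h.symm] at hfu; omega
  · rw [hd, if_neg (by omega)] at hfu; omega

lemma low_three (hr : 3 ≤ r) (hm : 3 ≤ m)
    (hdisj : ∀ i j, i < j → j < m → j ≠ i + 1 → e i ∩ e j = ∅)
    (hcons : ∀ i, i + 1 < m → e i ∩ e (i + 1) = {w i})
    (hcard : ∀ i < m, (e i).card = r) {f : V → ℕ}
    (hstrong : ∀ i < m, ∀ u ∈ e i, ∀ v ∈ e i, u ≠ v → 2 ≤ hDist f u v)
    (hweak : ∀ i, i + 1 < m → ∀ u ∈ e i, ∀ v ∈ e (i+1),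
        u ≠ w i → v ≠ w i → u ≠ v → 1 ≤ hDist f u v) :
    2*r ≤ hSpan f := by
  by_contra hc
  push_neg at hc
  have hB : hSpan f ≤ 2*r - 1 := by omega
  set lo := sInf (Set.range f) with hlo
  have hbound : ∀ v : V, lo ≤ f v ∧ f v ≤ lo + (2*r - 1) := fun v => span_setup hB v
  -- Step A : each of `w 0`, `w 1` gets an extreme colour
  have stepA : ∀ i, i + 1 < m → f (w i) = lo ∨ f (w i) = lo + (2*r - 1) := by
    intro i hi
    by_contra hcc
    push_neg at hcc
    have hwi := w_mem hcons hi
    have hbw := hbound (w i)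
    set c := f (w i) with hcdef
    have hc1 : lo < c := lt_of_le_of_ne hbw.1 (fun h => hcc.1 h.symm)
    have hc2 : c < lo + (2*r-1) := lt_of_le_of_ne hbw.2 hcc.2
    set U := e i ∪ e (i+1) with hU
    have hUcard : U.card = 2*r - 1 := card_union_consec (by omega) hcard hcons hi
    have hinj := inj_union hdisj hcons hstrong hweak hi
    have hsub : U.image f ⊆ ((Finset.Icc lo (lo + (2*r-1))).erase (c-1)).erase (c+1) := by
      intro a ha
      obtain ⟨u, hu, rfl⟩ := Finset.mem_image.1 ha
      have hbu := hbound u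
      by_cases huw : u = w i
      · subst huw
        rw [Finset.mem_erase, Finset.mem_erase, Finset.mem_Icc]
        omega
      · have key : 2 ≤ hDist f u (w i) := by
          rw [hU, Finset.mem_union] at hu
          rcases hu with hu | hu
          · exact hstrong i (by omega) u hu (w i) hwi.1 huw
          · exact hstrong (i+1) hi u hu (w i) hwi.2 huw
        unfold hDist at key
        rw [Finset.mem_erase, Finset.mem_erase, Finset.mem_Icc]
        omega
    have hle := Finset.card_le_card hsub
    have h1 : (c+1) ∈ (Finset.Icc lo (lo + (2*r-1))).erase (c-1) := by
      rw [Finset.mem_erase, Finset.mem_Icc]; omega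
    have h2 : (c-1) ∈ Finset.Icc lo (lo + (2*r-1)) := by
      rw [Finset.mem_Icc]; omega
    rw [Finset.card_erase_of_mem h1, Finset.card_erase_of_mem h2, Nat.card_Icc] at hle
    have himg : (U.image f).card = 2*r - 1 := by
      rw [Finset.card_image_of_injOn, hUcard]
      intro u hu v hv huv
      by_contra hne
      exact hinj u hu v hv hne huv
    omega
  have hw0 := w_mem hcons (show 0 + 1 < m by omega)
  have hw1 := w_mem hcons (show 1 + 1 < m by omega)
  have hw01 : w 0 ≠ w 1 := by
    intro h
    have h2 : w 0 ∈ e 2 := h ▸ hw1.2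
    rcases path_disj hdisj hcons (show 0 < m by omega) (show 2 < m by omega)
      (by omega) hw0.1 h2 with ⟨h', _⟩ | ⟨h', _⟩ <;> omega
  have hgap : 2 ≤ hDist f (w 0) (w 1) :=
    hstrong 1 (by omega) (w 0) hw0.2 (w 1) hw1.1 hw01
  unfold hDist at hgap
  rcases stepA 0 (by omega) with h00 | h00 <;> rcases stepA 1 (by omega) with h11 | h11
  · omega
  · exact three_aux hr hm hdisj hcons hcard hstrong hweak hbound h00 h11
  · -- flipped case
    set g : V → ℕ := fun v => 2*lo + (2*r - 1) - f v with hg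
    have hgbound : ∀ v : V, lo ≤ g v ∧ g v ≤ lo + (2*r - 1) := by
      intro v; have := hbound v; rw [hg]; simp only; omega
    have hgstrong : ∀ i < m, ∀ u ∈ e i, ∀ v ∈ e i, u ≠ v → 2 ≤ hDist g u v := by
      intro i hi u hu v hv huv
      have := hstrong i hi u hu v hv huv
      have h1 := hbound u; have h2 := hbound v
      unfold hDist at *; rw [hg]; simp only; omega
    have hgweak : ∀ i, i + 1 < m → ∀ u ∈ e i, ∀ v ∈ e (i+1),
        u ≠ w i → v ≠ w i → u ≠ v → 1 ≤ hDist g u v := by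
      intro i hi u hu v hv huw hvw huv
      have := hweak i hi u hu v hv huw hvw huv
      have h1 := hbound u; have h2 := hbound v
      unfold hDist at *; rw [hg]; simp only; omega
    have hg0 : g (w 0) = lo := by rw [hg]; simp only; omega
    have hg1 : g (w 1) = lo + (2*r - 1) := by
      rw [hg]; simp only; have := hbound (w 1); omega
    exact three_aux hr hm hdisj hcons hcard hgstrong hgweak hgbound hg0 hg1
  · omega

end Lower

section Constructions
variable {V : Type*} [Fintype V] {E : Finset (Finset V)} {r m : ℕ} {e : ℕ → Finset V} {w : ℕ → V}

lemma con_one (hr : 3 ≤ r) (hcard : ∀ i < 1, (e i).card = r)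
    (hcov : ∀ x : V, ∃ i < 1, x ∈ e i) :
    ∃ f : V → ℕ,
      (∀ i < 1, ∀ u ∈ e i, ∀ v ∈ e i, u ≠ v → 2 ≤ hDist f u v) ∧
      hSpan f = 2*r - 2 := by
  have hall : ∀ v : V, v ∈ e 0 := by
    intro v; obtain ⟨i, hi, hv⟩ := hcov v
    interval_cases i; exact hv
  have hc0 : (e 0).card = r := hcard 0 (by omega)
  refine ⟨fun v => 2 * fIdx (e 0) v, ?_, ?_⟩
  · intro i hi u hu v hv huv
    interval_cases i
    have hne : fIdx (e 0) u ≠ fIdx (e 0) v := fun h => huv (fIdx_inj hu hv h)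
    unfold hDist; simp only; omega
  · have hsup : Finset.univ.sup (fun v => 2 * fIdx (e 0) v) = 2*r - 2 := by
      apply le_antisymm
      · exact Finset.sup_le fun v _ => by
          have := fIdx_lt (hall v)
          rw [hc0] at this
          omega
      · obtain ⟨v, hv, hidx⟩ := fIdx_surj (show r - 1 < (e 0).card by rw [hc0]; omega)
        have h2 : 2*r - 2 = 2 * fIdx (e 0) v := by rw [hidx]; omega
        rw [h2]
        exact Finset.le_sup (f := fun v => 2 * fIdx (e 0) v) (Finset.mem_univ v)
    have hinf : sInf (Set.range (fun v => 2 * fIdx (e 0) v)) = 0 := by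
      apply Nat.sInf_eq_zero.2
      left
      obtain ⟨v, hv, hidx⟩ := fIdx_surj (show 0 < (e 0).card by rw [hc0]; omega)
      exact ⟨v, by show 2 * fIdx (e 0) v = 0; rw [hidx]⟩
    unfold hSpan
    rw [hsup, hinf]
    omega

lemma con_two (hr : 3 ≤ r)
    (hdisj : ∀ i j, i < j → j < 2 → j ≠ i + 1 → e i ∩ e j = ∅)
    (hcons : ∀ i, i + 1 < 2 → e i ∩ e (i + 1) = {w i})
    (hcard : ∀ i < 2, (e i).card = r)
    (hcov : ∀ x : V, ∃ i < 2, x ∈ e i) :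
    ∃ f : V → ℕ,
      (∀ i < 2, ∀ u ∈ e i, ∀ v ∈ e i, u ≠ v → 2 ≤ hDist f u v) ∧
      (∀ i, i + 1 < 2 → ∀ u ∈ e i, ∀ v ∈ e (i+1),
          u ≠ w i → v ≠ w i → u ≠ v → 1 ≤ hDist f u v) ∧
      hSpan f = 2*r - 1 := by
  have hw0 := w_mem hcons (show 0 + 1 < 2 by omega)
  set A := (e 0).erase (w 0) with hA
  set B := (e 1).erase (w 0) with hB
  have hcA : A.card = r - 1 := by rw [hA, Finset.card_erase_of_mem hw0.1, hcard 0 (by omega)]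
  have hcB : B.card = r - 1 := by rw [hB, Finset.card_erase_of_mem hw0.2, hcard 1 (by omega)]
  set f : V → ℕ := fun v => if v ∈ A then 2 + 2 * fIdx A v else if v ∈ B then 3 + 2 * fIdx B v else 0 with hf
  have hnotboth : ∀ v, v ∈ B → v ∉ A := by
    intro v hv hvA
    have h1 : v ∈ e 0 := Finset.mem_of_mem_erase hvA
    have h2 : v ∈ e 1 := Finset.mem_of_mem_erase hv
    have : v ∈ e 0 ∩ e 1 := Finset.mem_inter.2 ⟨h1, h2⟩
    rw [hcons 0 (by omega)] at this
    exact Finset.ne_of_mem_erase hvA (Finset.mem_singleton.1 this)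
  have hfA : ∀ v ∈ A, f v = 2 + 2 * fIdx A v := by
    intro v hv; rw [hf]; simp only [if_pos hv]
  have hfB : ∀ v ∈ B, f v = 3 + 2 * fIdx B v := by
    intro v hv; rw [hf]; simp only [if_neg (hnotboth v hv), if_pos hv]
  have hfw0 : f (w 0) = 0 := by
    rw [hf]; simp only [hA, hB]
    rw [if_neg (Finset.notMem_erase _ _), if_neg (Finset.notMem_erase _ _)]
  refine ⟨f, ?_, ?_, ?_⟩
  · intro i hi u hu v hv huv
    interval_cases i
    · by_cases huw : u = w 0 <;> by_cases hvw : v = w 0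
      · exact absurd (huw.trans hvw.symm) huv
      · have hvA : v ∈ A := Finset.mem_erase.2 ⟨hvw, hv⟩
        rw [huw]
        have := hfA v hvA
        unfold hDist; rw [hfw0, this]; simp; omega
      · have huA : u ∈ A := Finset.mem_erase.2 ⟨huw, hu⟩
        rw [hvw]
        have := hfA u huA
        unfold hDist; rw [hfw0, this]; simp; omega
      · have huA : u ∈ A := Finset.mem_erase.2 ⟨huw, hu⟩
        have hvA : v ∈ A := Finset.mem_erase.2 ⟨hvw, hv⟩
        have hne : fIdx A u ≠ fIdx A v := fun h => huv (fIdx_inj huA hvA h)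
        unfold hDist; rw [hfA u huA, hfA v hvA]; omega
    · by_cases huw : u = w 0 <;> by_cases hvw : v = w 0
      · exact absurd (huw.trans hvw.symm) huv
      · have hvB : v ∈ B := Finset.mem_erase.2 ⟨hvw, hv⟩
        rw [huw]
        unfold hDist; rw [hfw0, hfB v hvB]; simp; omega
      · have huB : u ∈ B := Finset.mem_erase.2 ⟨huw, hu⟩
        rw [hvw]
        unfold hDist; rw [hfw0, hfB u huB]; simp; omega
      · have huB : u ∈ B := Finset.mem_erase.2 ⟨huw, hu⟩
        have hvB : v ∈ B := Finset.mem_erase.2 ⟨hvw, hv⟩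
        have hne : fIdx B u ≠ fIdx B v := fun h => huv (fIdx_inj huB hvB h)
        unfold hDist; rw [hfB u huB, hfB v hvB]; omega
  · intro i hi u hu v hv huw hvw huv
    have hi0 : i = 0 := by omega
    subst hi0
    have huA : u ∈ A := Finset.mem_erase.2 ⟨huw, hu⟩
    have hvB : v ∈ B := Finset.mem_erase.2 ⟨hvw, hv⟩
    unfold hDist; rw [hfA u huA, hfB v hvB]; omega
  · have hub : ∀ v : V, f v ≤ 2*r - 1 := by
      intro v
      rw [hf]
      simp only
      by_cases hvA : v ∈ A
      · rw [if_pos hvA]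
        have := fIdx_lt hvA; rw [hcA] at this; omega
      · rw [if_neg hvA]
        by_cases hvB : v ∈ B
        · rw [if_pos hvB]
          have := fIdx_lt hvB; rw [hcB] at this; omega
        · rw [if_neg hvB]; omega
    have hsup : Finset.univ.sup f = 2*r - 1 := by
      apply le_antisymm
      · exact Finset.sup_le fun v _ => hub v
      · obtain ⟨v, hv, hidx⟩ := fIdx_surj (show r - 2 < B.card by rw [hcB]; omega)
        have : 2*r - 1 = f v := by rw [hfB v hv, hidx]; omega
        rw [this]
        exact Finset.le_sup (Finset.mem_univ v)
    have hinf : sInf (Set.range f) = 0 := Nat.sInf_eq_zero.2 (Or.inl ⟨w 0, hfw0⟩)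
    unfold hSpan
    rw [hsup, hinf]
    omega

end Constructions


/-- endpoint (cut-vertex) colours, period 4 -/
def hcol (r j : ℕ) : ℕ :=
  if j % 4 = 0 then 0 else if j % 4 = 1 then 2*r else if j % 4 = 2 then 1 else 2*r - 1

/-- base interior colours for a middle edge -/
def pbase (r i k : ℕ) : ℕ :=
  (if i % 4 = 0 then 2 else if i % 4 = 2 then 4 else 3) + 2*k

/-- interior colours of edge `i` (with special cases for the first and last edge) -/
def pmc (r m i k : ℕ) : ℕ :=
  if i = 0 then (if k = r - 2 then 2*r - 1 else 2 + 2*k)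
  else if i = m - 1 then (if k = r - 2 then hcol r i else pbase r i k)
  else pbase r i k

section Arith
variable {r : ℕ} (hr : 3 ≤ r)

lemma hcol_consec (j : ℕ) (hr : 3 ≤ r) :
    hcol r j + 2 ≤ hcol r (j+1) ∨ hcol r (j+1) + 2 ≤ hcol r j := by
  unfold hcol
  rcases (show j%4=0 ∨ j%4=1 ∨ j%4=2 ∨ j%4=3 by omega) with h|h|h|h <;>
    · have h' : (j+1)%4 = (j%4+1)%4 := by omega
      simp only [h] at h' ⊢
      norm_num at h' ⊢
      simp only [h']
      norm_num
      omega

lemma hcol_mod (j k : ℕ) (hr : 3 ≤ r) (h : hcol r j = hcol r k) : j % 4 = k % 4 := by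
  unfold hcol at h
  rcases (show j%4=0 ∨ j%4=1 ∨ j%4=2 ∨ j%4=3 by omega) with h1|h1|h1|h1 <;>
  rcases (show k%4=0 ∨ k%4=1 ∨ k%4=2 ∨ k%4=3 by omega) with h2|h2|h2|h2 <;>
    simp only [h1, h2] at h <;> norm_num at h <;> omega

lemma pbase_bound (i k : ℕ) (hr : 3 ≤ r) (hk : k ≤ r - 3) :
    2 ≤ pbase r i k ∧ pbase r i k ≤ 2*r - 2 := by
  unfold pbase
  rcases (show i%4=0 ∨ i%4=1 ∨ i%4=2 ∨ i%4=3 by omega) with h|h|h|h <;>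
    simp only [h] <;> norm_num <;> omega

lemma pbase_parity (i k : ℕ) : pbase r i k % 2 = i % 2 := by
  unfold pbase
  rcases (show i%4=0 ∨ i%4=1 ∨ i%4=2 ∨ i%4=3 by omega) with h|h|h|h <;>
    simp only [h] <;> norm_num <;> omega

lemma pbase_gap (i k k' : ℕ) (h : k ≠ k') :
    pbase r i k + 2 ≤ pbase r i k' ∨ pbase r i k' + 2 ≤ pbase r i k := by
  unfold pbase; omega

lemma hcol_ne_pbase (j i k : ℕ) (hr : 3 ≤ r) (hk : k ≤ r - 3) :
    hcol r j ≠ pbase r i k := by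
  have h1 := pbase_bound i k hr hk
  unfold hcol
  rcases (show j%4=0 ∨ j%4=1 ∨ j%4=2 ∨ j%4=3 by omega) with h|h|h|h <;>
    simp only [h] <;> norm_num <;> omega

lemma end_int_gap (i j k : ℕ) (hr : 3 ≤ r) (hk : k ≤ r - 3) (hj : j = i ∨ j + 1 = i) :
    hcol r j + 2 ≤ pbase r i k ∨ pbase r i k + 2 ≤ hcol r j := by
  unfold hcol pbase
  rcases (show i%4=0 ∨ i%4=1 ∨ i%4=2 ∨ i%4=3 by omega) with h|h|h|h <;>
    rcases hj with rfl | hj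
  · simp only [h]; norm_num <;> omega
  · have h' : j % 4 = 3 := by omega
    simp only [h, h']; norm_num <;> omega
  · simp only [h]; norm_num <;> omega
  · have h' : j % 4 = 0 := by omega
    simp only [h, h']; norm_num <;> omega
  · simp only [h]; norm_num <;> omega
  · have h' : j % 4 = 1 := by omega
    simp only [h, h']; norm_num <;> omega
  · simp only [h]; norm_num <;> omega
  · have h' : j % 4 = 2 := by omega
    simp only [h, h']; norm_num <;> omega
end Arith

lemma hcol_le {r : ℕ} (hr : 3 ≤ r) (j : ℕ) : hcol r j ≤ 2*r := by
  unfold hcol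
  rcases (show j%4=0 ∨ j%4=1 ∨ j%4=2 ∨ j%4=3 by omega) with h|h|h|h <;>
    simp only [h] <;> norm_num <;> omega

lemma pbase_zero {r : ℕ} (k : ℕ) : pbase r 0 k = 2 + 2*k := by unfold pbase; norm_num

lemma pmc_first (r m k : ℕ) : pmc r m 0 k = if k = r-2 then 2*r-1 else pbase r 0 k := by
  unfold pmc; rw [if_pos rfl, pbase_zero]

lemma pmc_last (r m k : ℕ) (h0 : m - 1 ≠ 0) :
    pmc r m (m-1) k = if k = r-2 then hcol r (m-1) else pbase r (m-1) k := by
  unfold pmc; rw [if_neg h0, if_pos rfl]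

lemma pmc_mid (r m i k : ℕ) (h0 : i ≠ 0) (h1 : i ≠ m-1) : pmc r m i k = pbase r i k := by
  unfold pmc; rw [if_neg h0, if_neg h1]

lemma pmc_le {r : ℕ} (hr : 3 ≤ r) (m i k : ℕ) (hk : k ≤ r - 2) : pmc r m i k ≤ 2*r := by
  have h1 := hcol_le hr i
  unfold pmc pbase
  rcases (show i%4=0 ∨ i%4=1 ∨ i%4=2 ∨ i%4=3 by omega) with h|h|h|h <;>
    simp only [h] <;> split_ifs <;> omega

noncomputable def iOf {V : Type*} (e : ℕ → Finset V) (m : ℕ) (v : V) : ℕ :=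
  if h : ∃ i, i < m ∧ v ∈ e i then h.choose else 0

lemma iOf_spec {V : Type*} {e : ℕ → Finset V} {m : ℕ} {v : V}
    (h : ∃ i, i < m ∧ v ∈ e i) : iOf e m v < m ∧ v ∈ e (iOf e m v) := by
  unfold iOf; rw [dif_pos h]; exact h.choose_spec

noncomputable def pathColor {V : Type*} (e : ℕ → Finset V) (w : ℕ → V) (r m : ℕ) (v : V) : ℕ :=
  if h : ∃ j, j < m - 1 ∧ v = w j then hcol r h.choose
  else pmc r m (iOf e m v) (fIdx (e (iOf e m v) \ (Finset.range (m-1)).image w) v)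

section ConThree
variable {V : Type*} [Fintype V] {r m : ℕ} {e : ℕ → Finset V} {w : ℕ → V}

lemma con_three (hr : 3 ≤ r) (hm : 3 ≤ m)
    (hdisj : ∀ i j, i < j → j < m → j ≠ i + 1 → e i ∩ e j = ∅)
    (hcons : ∀ i, i + 1 < m → e i ∩ e (i + 1) = {w i})
    (hcard : ∀ i < m, (e i).card = r)
    (hcov : ∀ x : V, ∃ i < m, x ∈ e i) :
    ∃ f : V → ℕ,
      (∀ i < m, ∀ u ∈ e i, ∀ v ∈ e i, u ≠ v → 2 ≤ hDist f u v) ∧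
      (∀ i, i + 1 < m → ∀ u ∈ e i, ∀ v ∈ e (i+1),
          u ≠ w i → v ≠ w i → u ≠ v → 1 ≤ hDist f u v) ∧
      hSpan f = 2*r := by
  classical
  set cuts : Finset V := (Finset.range (m-1)).image w with hcuts
  set Int : ℕ → Finset V := fun i => e i \ cuts with hInt
  set f : V → ℕ := pathColor e w r m with hf
  -- injectivity of w
  have hwinj : ∀ j k, j < m-1 → k < m-1 → w j = w k → j = k := by
    intro j k hj hk hjk
    by_contra hne
    rcases Nat.lt_or_ge j k with h | h
    · have h1 : w j ∈ e j := (w_mem hcons (by omega)).1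
      have h2 : w j ∈ e (k+1) := hjk ▸ (w_mem hcons (by omega)).2
      rcases path_disj hdisj hcons (by omega) (by omega) (by omega) h1 h2 with
        ⟨h', _⟩ | ⟨h', _⟩ <;> omega
    · have h' : k < j := by omega
      have h1 : w k ∈ e k := (w_mem hcons (by omega)).1
      have h2 : w k ∈ e (j+1) := hjk ▸ (w_mem hcons (by omega)).2
      rcases path_disj hdisj hcons (by omega) (by omega) (by omega) h1 h2 with
        ⟨h'', _⟩ | ⟨h'', _⟩ <;> omega
  -- which edges contain a cut vertex
  have hcut_edge : ∀ j i, j < m-1 → i < m → w j ∈ e i → j = i ∨ j + 1 = i := by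
    intro j i hj hi hmem
    by_contra hne
    push_neg at hne
    have h1 : w j ∈ e j := (w_mem hcons (by omega)).1
    rcases path_disj hdisj hcons hi (by omega) (fun h => hne.1 h.symm) hmem h1 with
      ⟨h', hw'⟩ | ⟨h', hw'⟩
    · have hi' : i < m - 1 := by omega
      have := hwinj j i hj hi' hw'
      omega
    · exact hne.2 h'.symm
  -- cut values of f
  have hfw : ∀ j, j < m-1 → f (w j) = hcol r j := by
    intro j hj
    rw [hf]
    unfold pathColor
    rw [dif_pos ⟨j, hj, rfl⟩]
    have hspec := (⟨j, hj, rfl⟩ : ∃ j', j' < m - 1 ∧ w j = w j').choose_spec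
    congr 1
    exact hwinj _ _ hspec.1 hj hspec.2.symm
  -- interior values of f
  have hiOf : ∀ v i, i < m → v ∈ e i → v ∉ cuts → iOf e m v = i := by
    intro v i hi hv hvc
    have hex : ∃ i, i < m ∧ v ∈ e i := ⟨i, hi, hv⟩
    obtain ⟨h1, h2⟩ := iOf_spec hex
    by_contra hne
    rcases path_disj hdisj hcons h1 hi hne h2 hv with ⟨h', hw'⟩ | ⟨h', hw'⟩
    · exact hvc (Finset.mem_image.2 ⟨iOf e m v, Finset.mem_range.2 (by omega), hw'.symm⟩)
    · exact hvc (Finset.mem_image.2 ⟨i, Finset.mem_range.2 (by omega), hw'.symm⟩)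
  have hnotcut : ∀ v : V, v ∉ cuts → ¬ ∃ j, j < m - 1 ∧ v = w j := by
    intro v hvc ⟨j, hj, hvj⟩
    exact hvc (Finset.mem_image.2 ⟨j, Finset.mem_range.2 hj, hvj.symm⟩)
  have hfint : ∀ v i, i < m → v ∈ Int i → f v = pmc r m i (fIdx (Int i) v) := by
    intro v i hi hv
    rw [hInt] at hv
    simp only [Finset.mem_sdiff] at hv
    rw [hf]
    unfold pathColor
    rw [dif_neg (hnotcut v hv.2), hiOf v i hi hv.1 hv.2]

  -- membership of cut vertices in cuts
  have hwcuts : ∀ j, j < m-1 → w j ∈ cuts := by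
    intro j hj
    exact Finset.mem_image.2 ⟨j, Finset.mem_range.2 hj, rfl⟩
  -- structure of interiors
  have hInt0 : Int 0 = (e 0).erase (w 0) := by
    ext v
    rw [hInt]
    simp only [Finset.mem_sdiff, Finset.mem_erase]
    constructor
    · rintro ⟨hv, hvc⟩
      exact ⟨fun h => hvc (h ▸ hwcuts 0 (by omega)), hv⟩
    · rintro ⟨hne, hv⟩
      refine ⟨hv, fun hvc => ?_⟩
      obtain ⟨j, hj, hwj⟩ := Finset.mem_image.1 hvc
      rw [Finset.mem_range] at hj
      rcases hcut_edge j 0 hj (by omega) (hwj ▸ hv) with h | h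
      · exact hne (by rw [← hwj, h])
      · omega
  have hIntLast : Int (m-1) = (e (m-1)).erase (w (m-2)) := by
    ext v
    rw [hInt]
    simp only [Finset.mem_sdiff, Finset.mem_erase]
    constructor
    · rintro ⟨hv, hvc⟩
      exact ⟨fun h => hvc (h ▸ hwcuts (m-2) (by omega)), hv⟩
    · rintro ⟨hne, hv⟩
      refine ⟨hv, fun hvc => ?_⟩
      obtain ⟨j, hj, hwj⟩ := Finset.mem_image.1 hvc
      rw [Finset.mem_range] at hj
      rcases hcut_edge j (m-1) hj (by omega) (hwj ▸ hv) with h | h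
      · omega
      · exact hne (by rw [← hwj]; congr 1; omega)
  have hIntMid : ∀ i, 0 < i → i < m-1 → Int i = ((e i).erase (w (i-1))).erase (w i) := by
    intro i h0 h1
    ext v
    rw [hInt]
    simp only [Finset.mem_sdiff, Finset.mem_erase]
    constructor
    · rintro ⟨hv, hvc⟩
      exact ⟨fun h => hvc (h ▸ hwcuts i (by omega)),
        fun h => hvc (h ▸ hwcuts (i-1) (by omega)), hv⟩
    · rintro ⟨hne1, hne2, hv⟩
      refine ⟨hv, fun hvc => ?_⟩
      obtain ⟨j, hj, hwj⟩ := Finset.mem_image.1 hvc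
      rw [Finset.mem_range] at hj
      rcases hcut_edge j i hj (by omega) (hwj ▸ hv) with h | h
      · exact hne1 (by rw [← hwj, h])
      · exact hne2 (by rw [← hwj]; congr 1; omega)
  -- cardinalities of interiors
  have hwmem : ∀ j, j < m - 1 → w j ∈ e j ∧ w j ∈ e (j+1) := fun j hj => w_mem hcons (by omega)
  have hc0 : (Int 0).card = r - 1 := by
    rw [hInt0, Finset.card_erase_of_mem (hwmem 0 (by omega)).1, hcard 0 (by omega)]
  have hclast : (Int (m-1)).card = r - 1 := by
    have hmm : m - 2 + 1 = m - 1 := by omega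
    have h2 : w (m-2) ∈ e (m-1) := by
      have := (hwmem (m-2) (by omega)).2
      rwa [hmm] at this
    rw [hIntLast, Finset.card_erase_of_mem h2, hcard (m-1) (by omega)]
  have hcmid : ∀ i, 0 < i → i < m-1 → (Int i).card = r - 2 := by
    intro i h0 h1
    have hmm : i - 1 + 1 = i := by omega
    have hwi : w i ∈ e i := (hwmem i h1).1
    have hwi1 : w (i-1) ∈ e i := by
      have := (hwmem (i-1) (by omega)).2
      rwa [hmm] at this
    have hne : w i ≠ w (i-1) := fun h => by
      have := hwinj i (i-1) h1 (by omega) h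
      omega
    rw [hIntMid i h0 h1,
      Finset.card_erase_of_mem (Finset.mem_erase.2 ⟨hne, hwi⟩),
      Finset.card_erase_of_mem hwi1, hcard i (by omega)]
    omega
  have hIntCard_le : ∀ i, i < m → (Int i).card ≤ r - 1 := by
    intro i hi
    by_cases h0 : i = 0
    · rw [h0, hc0]
    · by_cases h1 : i = m-1
      · rw [h1, hclast]
      · rw [hcmid i (by omega) (by omega)]; omega
  -- value of f on interiors, as case description
  have hval : ∀ i, i < m → ∀ x ∈ Int i,
      (f x = 2*r - 1 ∧ i = 0) ∨ (f x = hcol r i ∧ i = m-1) ∨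
      (∃ k, k ≤ r - 3 ∧ f x = pbase r i k) := by
    intro i hi x hx
    have hfx := hfint x i hi hx
    have hklt : fIdx (Int i) x < (Int i).card := fIdx_lt hx
    set k := fIdx (Int i) x with hk
    by_cases h0 : i = 0
    · subst h0
      rw [hc0] at hklt
      rw [pmc_first] at hfx
      by_cases hk2 : k = r-2
      · rw [if_pos hk2] at hfx; exact Or.inl ⟨hfx, rfl⟩
      · rw [if_neg hk2] at hfx; exact Or.inr (Or.inr ⟨k, by omega, hfx⟩)
    · by_cases h1 : i = m-1
      · subst h1
        rw [hclast] at hklt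
        rw [pmc_last _ _ _ (by omega)] at hfx
        by_cases hk2 : k = r-2
        · rw [if_pos hk2] at hfx; exact Or.inr (Or.inl ⟨hfx, rfl⟩)
        · rw [if_neg hk2] at hfx; exact Or.inr (Or.inr ⟨k, by omega, hfx⟩)
      · rw [hcmid i (by omega) (by omega)] at hklt
        rw [pmc_mid _ _ _ _ h0 h1] at hfx
        exact Or.inr (Or.inr ⟨k, by omega, hfx⟩)
  -- gap between an endpoint colour and an interior colour of the same edge
  have hkey_cutint : ∀ i, i < m → ∀ j, j < m-1 → (j = i ∨ j + 1 = i) → ∀ x ∈ Int i,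
      hcol r j + 2 ≤ f x ∨ f x + 2 ≤ hcol r j := by
    intro i hi j hj hje x hx
    rcases hval i hi x hx with ⟨hfx, rfl⟩ | ⟨hfx, rfl⟩ | ⟨k, hk, hfx⟩
    · -- first edge, extra colour 2r-1 ; j = 0
      have hj0 : j = 0 := by omega
      subst hj0
      have : hcol r 0 = 0 := by unfold hcol; norm_num
      rw [hfx, this]
      omega
    · -- last edge, extra colour hcol r (m-1) ; j+1 = m-1
      have hj1 : j + 1 = m - 1 := by omega
      have := hcol_consec j hr
      rw [hfx, ← hj1]
      omega
    · rw [hfx]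
      exact end_int_gap i j k hr hk hje
  -- gap between two interior colours of the same edge
  have hintint : ∀ i, i < m → ∀ u ∈ Int i, ∀ x ∈ Int i, u ≠ x →
      f u + 2 ≤ f x ∨ f x + 2 ≤ f u := by
    intro i hi u hu x hx hux
    have hfu := hfint u i hi hu
    have hfx := hfint x i hi hx
    have hku : fIdx (Int i) u < (Int i).card := fIdx_lt hu
    have hkx : fIdx (Int i) x < (Int i).card := fIdx_lt hx
    set k := fIdx (Int i) u with hk
    set k' := fIdx (Int i) x with hk'
    have hkk : k ≠ k' := fun h => hux (fIdx_inj hu hx h)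
    by_cases h0 : i = 0
    · subst h0
      rw [hc0] at hku hkx
      rw [pmc_first] at hfu hfx
      rw [pbase_zero] at hfu hfx
      rw [hfu, hfx]
      split_ifs with ha hb hb <;> omega
    · by_cases h1 : i = m-1
      · subst h1
        rw [hclast] at hku hkx
        rw [pmc_last _ _ _ (by omega)] at hfu hfx
        rw [hfu, hfx]
        split_ifs with ha hb hb
        · omega
        · have := end_int_gap (m-1) (m-1) k' hr (by omega) (Or.inl rfl)
          omega
        · have := end_int_gap (m-1) (m-1) k hr (by omega) (Or.inl rfl)
          omega
        · have := pbase_gap (r := r) (m-1) k k' hkk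
          omega
      · rw [hcmid i (by omega) (by omega)] at hku hkx
        rw [pmc_mid _ _ _ _ h0 h1] at hfu hfx
        rw [hfu, hfx]
        exact pbase_gap _ _ _ hkk
  -- classification of vertices of an edge
  have hclassify : ∀ i, i < m → ∀ v ∈ e i,
      (∃ j, j < m-1 ∧ v = w j ∧ (j = i ∨ j + 1 = i)) ∨ v ∈ Int i := by
    intro i hi v hv
    by_cases hvc : v ∈ cuts
    · obtain ⟨j, hj, hwj⟩ := Finset.mem_image.1 hvc
      rw [Finset.mem_range] at hj
      exact Or.inl ⟨j, hj, hwj.symm, hcut_edge j i hj hi (hwj ▸ hv)⟩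
    · exact Or.inr (by rw [hInt]; exact Finset.mem_sdiff.2 ⟨hv, hvc⟩)
  refine ⟨f, ?_, ?_, ?_⟩
  · -- strong condition
    intro i hi u hu v hv huv
    unfold hDist
    rcases hclassify i hi u hu with ⟨j1, hj1, rfl, hj1e⟩ | hu' <;>
      rcases hclassify i hi v hv with ⟨j2, hj2, rfl, hj2e⟩ | hv'
    · -- both cuts
      have hjne : j1 ≠ j2 := fun h => huv (h ▸ rfl)
      rw [hfw j1 hj1, hfw j2 hj2]
      rcases hj1e with e1 | e1 <;> rcases hj2e with e2 | e2
      · omega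
      · have h12 : j1 = j2 + 1 := by omega
        have := hcol_consec j2 hr
        rw [h12]; omega
      · have h12 : j2 = j1 + 1 := by omega
        have := hcol_consec j1 hr
        rw [h12]; omega
      · omega
    · rw [hfw j1 hj1]
      have := hkey_cutint i hi j1 hj1 hj1e v hv'
      omega
    · rw [hfw j2 hj2]
      have := hkey_cutint i hi j2 hj2 hj2e u hu'
      omega
    · have := hintint i hi u hu' v hv' huv
      omega
  · -- weak condition
    intro i hi u hu v hv huw hvw huv
    unfold hDist
    have hsuff : f u ≠ f v := by
      rcases hclassify i (by omega) u hu with ⟨j1, hj1, rfl, hj1e⟩ | hu' <;>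
        rcases hclassify (i+1) hi v hv with ⟨j2, hj2, rfl, hj2e⟩ | hv'
      · -- cut vs cut
        have hj1i : j1 + 1 = i := by
          rcases hj1e with h | h
          · exact absurd (h ▸ rfl) huw
          · exact h
        have hj2i : j2 = i + 1 := by
          rcases hj2e with h | h
          · exact h
          · exact absurd (by rw [show j2 = i by omega]) hvw
        rw [hfw j1 hj1, hfw j2 hj2]
        intro h
        have := hcol_mod j1 j2 hr h
        omega
      · -- cut vs interior of e (i+1)
        have hj1i : j1 + 1 = i := by
          rcases hj1e with h | h
          · exact absurd (h ▸ rfl) huw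
          · exact h
        rw [hfw j1 hj1]
        rcases hval (i+1) hi v hv' with ⟨hfv, hi10⟩ | ⟨hfv, hi1m⟩ | ⟨k, hk, hfv⟩
        · omega
        · rw [hfv]
          intro h
          have := hcol_mod j1 (i+1) hr h
          omega
        · rw [hfv]
          exact hcol_ne_pbase j1 (i+1) k hr hk
      · -- interior of e i vs cut
        have hj2i : j2 = i + 1 := by
          rcases hj2e with h | h
          · exact h
          · exact absurd (by rw [show j2 = i by omega]) hvw
        rw [hfw j2 hj2]
        rcases hval i (by omega) u hu' with ⟨hfu, hi0⟩ | ⟨hfu, him⟩ | ⟨k, hk, hfu⟩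
        · subst hi0
          rw [hfu, hj2i]
          have : hcol r (0+1) = 2*r := by unfold hcol; norm_num
          rw [this]
          omega
        · omega
        · rw [hfu]
          exact fun h => (hcol_ne_pbase j2 i k hr hk) h.symm
      · -- interior vs interior
        rcases hval i (by omega) u hu' with ⟨hfu, hi0⟩ | ⟨hfu, him⟩ | ⟨k, hk, hfu⟩
        · -- u in first edge with extra colour 2r-1
          rcases hval (i+1) hi v hv' with ⟨hfv, hi10⟩ | ⟨hfv, hi1m⟩ | ⟨k', hk', hfv⟩
          · omega
          · omega
          · have := pbase_bound (i+1) k' hr hk'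
            rw [hfu, hfv]
            omega
        · omega
        · rcases hval (i+1) hi v hv' with ⟨hfv, hi10⟩ | ⟨hfv, hi1m⟩ | ⟨k', hk', hfv⟩
          · omega
          · rw [hfu, hfv]
            exact fun h => (hcol_ne_pbase (i+1) i k hr hk) h.symm
          · rw [hfu, hfv]
            have h1 := pbase_parity (r := r) i k
            have h2 := pbase_parity (r := r) (i+1) k'
            omega
    omega
  · -- span
    have hub : ∀ v : V, f v ≤ 2*r := by
      intro v
      by_cases hvc : v ∈ cuts
      · obtain ⟨j, hj, hwj⟩ := Finset.mem_image.1 hvc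
        rw [Finset.mem_range] at hj
        rw [← hwj, hfw j hj]
        exact hcol_le hr j
      · obtain ⟨i, hi, hvi⟩ := hcov v
        have hvint : v ∈ Int i := by rw [hInt]; exact Finset.mem_sdiff.2 ⟨hvi, hvc⟩
        rw [hfint v i hi hvint]
        have h1 := fIdx_lt hvint
        have h2 := hIntCard_le i hi
        exact pmc_le hr m i _ (by omega)
    have hw1v : f (w 1) = 2*r := by
      rw [hfw 1 (by omega)]
      unfold hcol; norm_num
    have hsup : Finset.univ.sup f = 2*r := by
      apply le_antisymm
      · exact Finset.sup_le fun v _ => hub v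
      · rw [← hw1v]
        exact Finset.le_sup (Finset.mem_univ (w 1))
    have hw0v : f (w 0) = 0 := by
      rw [hfw 0 (by omega)]
      unfold hcol; norm_num
    have hinf : sInf (Set.range f) = 0 := Nat.sInf_eq_zero.2 (Or.inl ⟨w 0, hw0v⟩)
    unfold hSpan
    rw [hsup, hinf]
    omega

end ConThree

/-- For an `r`-uniform hyperpath `P^m_r` with `r ≥ 3`:
`λ(P^m_r) = 2r - 2` if `m = 1`, `2r - 1` if `m = 2`, and `2r` if `m ≥ 3`. -/
theorem lamL_hyperpath {V : Type*} [Fintype V] (E : Finset (Finset V))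
    (r m : ℕ) (e : ℕ → Finset V) (w : ℕ → V)
    (hr : 3 ≤ r) (hm : 1 ≤ m)
    (hpath : IsHyperpath E r m e w) :
    lamL E 2 1 = if m = 1 then 2 * r - 2 else if m = 2 then 2 * r - 1 else 2 * r := by
  obtain ⟨hE, hcard, hdisj, hcons, hcov⟩ := hpath
  have hchar := col_iff hE hdisj hcons
  unfold lamL
  by_cases hm1 : m = 1
  · subst hm1
    rw [if_pos rfl]
    obtain ⟨f0, hstrong, hspan⟩ := con_one hr hcard hcov
    have hcol0 : IsLColoring E 2 1 f0 :=
      (hchar f0).2 ⟨hstrong, fun i hi => absurd hi (by omega)⟩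
    apply le_antisymm
    · exact Nat.sInf_le ⟨f0, hcol0, hspan⟩
    · refine le_csInf ⟨_, f0, hcol0, hspan⟩ ?_
      rintro s ⟨g, hg, rfl⟩
      exact low_one hr (le_refl 1) hcard ((hchar g).1 hg).1
  · by_cases hm2 : m = 2
    · subst hm2
      rw [if_neg hm1, if_pos rfl]
      obtain ⟨f0, hstrong, hweak, hspan⟩ := con_two hr hdisj hcons hcard hcov
      have hcol0 : IsLColoring E 2 1 f0 := (hchar f0).2 ⟨hstrong, hweak⟩
      apply le_antisymm
      · exact Nat.sInf_le ⟨f0, hcol0, hspan⟩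
      · refine le_csInf ⟨_, f0, hcol0, hspan⟩ ?_
        rintro s ⟨g, hg, rfl⟩
        obtain ⟨hgs, hgw⟩ := (hchar g).1 hg
        exact low_two hr (le_refl 2) hdisj hcons hcard hgs hgw
    · have hm3 : 3 ≤ m := by omega
      rw [if_neg hm1, if_neg hm2]
      obtain ⟨f0, hstrong, hweak, hspan⟩ := con_three hr hm3 hdisj hcons hcard hcov
      have hcol0 : IsLColoring E 2 1 f0 := (hchar f0).2 ⟨hstrong, hweak⟩
      apply le_antisymm
      · exact Nat.sInf_le ⟨f0, hcol0, hspan⟩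
      · refine le_csInf ⟨_, f0, hcol0, hspan⟩ ?_
        rintro s ⟨g, hg, rfl⟩
        obtain ⟨hgs, hgw⟩ := (hchar g).1 hg
        exact low_three hr hm3 hdisj hcons hcard hgs hgw
end
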